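/- Let $T$ be an order bounded $f$-linear operator on $A^\sim$. Then for all $F, G \in (A^\sim)^\sim_n$, the order adjoint satisfies $G \cdot T'(F) = T'(G \cdot F)$, where $G \cdot F$ is the Arens product in $(A^\sim)^\sim_n$. -/

import Mathlib

noncomputable section

/-- Riesz space (real vector lattice) axioms, as a `Prop`-valued class. -/
class RieszSp (E : Type*) [AddCommGroup E] [Lattice E] [Module ℝ E] : Prop where
  add_le_add_left : ∀ a b : E, a ≤ b → ∀ c : E, c + a ≤ c + b
  smul_nonneg : ∀ (r : ℝ) (a : E), 0 ≤ r → 0 ≤ a → 0 ≤ r • a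

/-- Archimedean (real) f-algebra axioms, as a `Prop`-valued class. -/
class FAlg (A : Type*) [CommRing A] [Lattice A] [Module ℝ A] extends RieszSp A : Prop where
  mul_nonneg : ∀ a b : A, 0 ≤ a → 0 ≤ b → 0 ≤ a * b
  disjoint_mul : ∀ a b c : A, a ⊓ b = 0 → 0 ≤ c → (c * a) ⊓ b = 0
  archimedean : ∀ a b : A, (∀ n : ℕ, (n : ℝ) • a ≤ b) → a ≤ 0

/-- A linear functional is order bounded if it is bounded on order intervals. -/
def OrderBddFn {E : Type*} [AddCommGroup E] [Lattice E] [Module ℝ E]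
    (φ : E →ₗ[ℝ] ℝ) : Prop :=
  ∀ a b : E, ∃ M : ℝ, ∀ x : E, a ≤ x → x ≤ b → |φ x| ≤ M

/-- A linear functional is order continuous if it sends downward directed sets with
infimum `0` to nets converging to `0`. -/
def OrdContFn {E : Type*} [AddCommGroup E] [Lattice E] [Module ℝ E]
    (φ : E →ₗ[ℝ] ℝ) : Prop :=
  ∀ s : Set E, s.Nonempty → DirectedOn (· ≥ ·) s → IsGLB s 0 →
    ∀ ε : ℝ, 0 < ε → ∃ d ∈ s, ∀ d' ∈ s, d' ≤ d → |φ d'| < ε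

/-- The data realizing `D` as the order dual `A^∼` of the f-algebra `A` (with separating
order dual) and `N` as the order continuous part `(A^∼)^∼_n` of the order bidual of `A`,
together with the Arens multiplication and its actions. -/
class DualSetting (A : Type*) [CommRing A] [Lattice A] [Module ℝ A]
    (D : Type*) [AddCommGroup D] [Lattice D] [Module ℝ D]
    (N : Type*) [CommRing N] [Lattice N] [Module ℝ N] where
  dual : D →ₗ[ℝ] A →ₗ[ℝ] ℝ
  bidual : N →ₗ[ℝ] D →ₗ[ℝ] ℝ
  dual_inj : Function.Injective dual
  bidual_inj : Function.Injective bidual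
  dual_bdd : ∀ d : D, OrderBddFn (dual d)
  dual_surj : ∀ φ : A →ₗ[ℝ] ℝ, OrderBddFn φ → ∃ d : D, dual d = φ
  dual_order : ∀ d : D, 0 ≤ d ↔ ∀ a : A, 0 ≤ a → 0 ≤ dual d a
  bidual_bdd : ∀ F : N, OrderBddFn (bidual F)
  bidual_cont : ∀ F : N, OrdContFn (bidual F)
  bidual_surj : ∀ Φ : D →ₗ[ℝ] ℝ, OrderBddFn Φ → OrdContFn Φ → ∃ F : N, bidual F = Φ
  bidual_order : ∀ F : N, 0 ≤ F ↔ ∀ d : D, 0 ≤ d → 0 ≤ bidual F d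
  separating : ∀ a : A, (∀ d : D, dual d a = 0) → a = 0
  /-- the action `f ⋅ a` of `A` on `A^∼`:  `(f ⋅ a)(b) = f (a b)` -/
  dsmul : A → D → D
  dsmul_eval : ∀ (a : A) (f : D) (b : A), dual (dsmul a f) b = dual f (a * b)
  /-- the action `F ⋅ f` of `(A^∼)^∼_n` on `A^∼`:  `(F ⋅ f)(a) = F (f ⋅ a)` -/
  nsmul : N → D → D
  nsmul_eval : ∀ (F : N) (f : D) (a : A), dual (nsmul F f) a = bidual F (dsmul a f)
  /-- the Arens product on `(A^∼)^∼_n`:  `(F * G)(f) = F (G ⋅ f)` -/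
  mul_eval : ∀ (F G : N) (f : D), bidual (F * G) f = bidual F (nsmul G f)


section Infra
variable {E : Type*} [AddCommGroup E] [Lattice E] [Module ℝ E] [RieszSp E]

instance (priority := 100) RieszSp.toCovLeft : CovariantClass E E (· + ·) (· ≤ ·) :=
  ⟨fun c a b h => RieszSp.add_le_add_left a b h c⟩

instance (priority := 100) RieszSp.toCovRight :
    CovariantClass E E (Function.swap (· + ·)) (· ≤ ·) :=
  ⟨fun c a b h => by simpa [add_comm] using RieszSp.add_le_add_left a b h c⟩

lemma rsmul_mono {r : ℝ} (hr : 0 ≤ r) {x y : E} (h : x ≤ y) : r • x ≤ r • y :=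
  sub_nonneg.1 (by rw [← smul_sub]; exact RieszSp.smul_nonneg _ _ hr (sub_nonneg.2 h))

lemma rsmul_sup {r : ℝ} (hr : 0 < r) (x y : E) : r • (x ⊔ y) = (r • x) ⊔ (r • y) := by
  refine le_antisymm ?_ (sup_le (rsmul_mono hr.le le_sup_left) (rsmul_mono hr.le le_sup_right))
  have h : x ⊔ y ≤ r⁻¹ • ((r • x) ⊔ (r • y)) := by
    refine sup_le ?_ ?_
    · have h1 : r⁻¹ • (r • x) ≤ r⁻¹ • ((r • x) ⊔ (r • y)) :=
        rsmul_mono (by positivity) le_sup_left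
      rwa [smul_smul, inv_mul_cancel₀ hr.ne', one_smul] at h1
    · have h1 : r⁻¹ • (r • y) ≤ r⁻¹ • ((r • x) ⊔ (r • y)) :=
        rsmul_mono (by positivity) le_sup_right
      rwa [smul_smul, inv_mul_cancel₀ hr.ne', one_smul] at h1
  have h2 := rsmul_mono hr.le h
  rwa [smul_smul, mul_inv_cancel₀ hr.ne', one_smul] at h2

lemma posPart_smul {r : ℝ} (hr : 0 ≤ r) (x : E) : (r • x)⁺ = r • x⁺ := by
  rcases eq_or_lt_of_le hr with h | h
  · simp [← h, posPart_def]
  · rw [posPart_def, posPart_def, rsmul_sup h, smul_zero]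

lemma abs_smul' {r : ℝ} (hr : 0 ≤ r) (x : E) : |r • x| = r • |x| := by
  rcases eq_or_lt_of_le hr with h | h
  · simp [← h]
  · show (r • x) ⊔ -(r • x) = r • (x ⊔ -x)
    rw [rsmul_sup h, smul_neg]

lemma sub_inf_eq_posPart (a b : E) : a - a ⊓ b = (a - b)⁺ := by
  rw [posPart_def, sub_eq_add_neg a (a ⊓ b), neg_inf, add_sup]
  simp [sub_eq_add_neg, sup_comm]

lemma inf_add_le' {u v w : E} (hu : 0 ≤ u) (hv : 0 ≤ v) (hw : 0 ≤ w) :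
    u ⊓ (v + w) ≤ u ⊓ v + u ⊓ w := by
  set s := u ⊓ (v + w) with hs
  have hsu : s ≤ u := inf_le_left
  have hsvw : s ≤ v + w := inf_le_right
  have key : s - u ⊓ v ≤ u ⊓ w := by
    rw [sub_inf]
    refine sup_le (le_inf ?_ ?_) (le_inf ?_ ?_)
    · exact le_trans (sub_nonpos.2 hsu) hu
    · exact le_trans (sub_nonpos.2 hsu) hw
    · exact sub_le_iff_le_add.2 (le_trans hsu (le_add_of_nonneg_right hv))
    · exact sub_le_iff_le_add.2 (by rwa [add_comm])
  have := sub_le_iff_le_add.1 key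
  rwa [add_comm] at this

/-- disjointness is preserved by natural scaling -/
lemma disj_nsmul {x y : E} (hx : 0 ≤ x) (hy : 0 ≤ y) (h : x ⊓ y = 0) (m : ℕ) :
    x ⊓ ((m : ℝ) • y) = 0 := by
  induction m with
  | zero => simp [le_antisymm (inf_le_right) (le_inf hx le_rfl)]
  | succ k ih =>
    have hky : (0:E) ≤ (k : ℝ) • y := RieszSp.smul_nonneg _ _ (by positivity) hy
    have : x ⊓ ((k : ℝ) • y + y) ≤ x ⊓ ((k : ℝ) • y) + x ⊓ y := inf_add_le' hx hky hy
    have h2 : x ⊓ ((k : ℝ) • y + y) ≤ 0 := by rw [ih, h] at this; simpa using this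
    have h3 : (0:E) ≤ x ⊓ ((k : ℝ) • y + y) := le_inf hx (by positivity)
    have : ((k:ℝ) + 1) • y = (k : ℝ) • y + y := by rw [add_smul, one_smul]
    rw [Nat.cast_succ, this]
    exact le_antisymm h2 h3

lemma disj_add {x y z : E} (hx : 0 ≤ x) (hy : 0 ≤ y) (hz : 0 ≤ z)
    (h1 : x ⊓ y = 0) (h2 : x ⊓ z = 0) : x ⊓ (y + z) = 0 :=
  le_antisymm (by calc x ⊓ (y + z) ≤ x ⊓ y + x ⊓ z := inf_add_le' hx hy hz
                  _ = 0 := by rw [h1, h2, add_zero])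
    (le_inf hx (by positivity))

/-- if `w ≤ V` and `w ⊓ c = 0` then `w + V ⊓ c ≤ V` -/
lemma add_inf_le_of_disj {w V c : E} (hwV : w ≤ V) (hdisj : w ⊓ c = 0) :
    w + V ⊓ c ≤ V := by
  have h1 : w ⊓ (V ⊓ c) = 0 := by
    refine le_antisymm ?_ ?_
    · exact le_trans (inf_le_inf_left w inf_le_right) (le_of_eq hdisj)
    · rw [← hdisj]; exact le_inf inf_le_left (inf_le_inf hwV le_rfl)
  have h2 : w + V ⊓ c = w ⊓ (V ⊓ c) + (w ⊔ (V ⊓ c)) := (inf_add_sup _ _).symm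
  rw [h2, h1, zero_add]
  exact sup_le hwV inf_le_left

lemma isLUB_shift {S : Set E} {z : E} (c : E) (h : IsLUB S z) :
    IsLUB ((fun x => c + x) '' S) (c + z) := by
  constructor
  · rintro _ ⟨x, hx, rfl⟩
    exact add_le_add_right (h.1 hx) c
  · rintro w hw
    have : ∀ x ∈ S, x ≤ w - c := by
      intro x hx
      have := hw ⟨x, hx, rfl⟩
      exact le_sub_iff_add_le'.2 this
    have := h.2 this
    exact add_le_of_le_sub_left this

lemma isLUB_negimg {S : Set E} {z : E} (h : IsGLB S z) : IsLUB ((fun x => -x) '' S) (-z) := by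
  constructor
  · rintro _ ⟨x, hx, rfl⟩
    exact neg_le_neg_iff.2 (h.1 hx)
  · rintro w hw
    have : ∀ x ∈ S, -w ≤ x := by
      intro x hx
      have := hw ⟨x, hx, rfl⟩
      exact neg_le_of_neg_le this
    exact neg_le_of_neg_le (h.2 this)

lemma isLUB_posPart {S : Set E} {z : E} (hne : S.Nonempty) (h : IsLUB S z) :
    IsLUB ((fun x => x⁺) '' S) (z⁺) := by
  constructor
  · rintro _ ⟨x, hx, rfl⟩
    exact posPart_mono (h.1 hx)
  · rintro w hw
    obtain ⟨x0, hx0⟩ := hne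
    have hw0 : 0 ≤ w := le_trans (posPart_nonneg x0) (hw ⟨x0, hx0, rfl⟩)
    have : ∀ x ∈ S, x ≤ w := fun x hx => le_trans (le_posPart x) (hw ⟨x, hx, rfl⟩)
    have hzw := h.2 this
    rw [posPart_def]
    exact sup_le hzw hw0

/-- infinite distributivity from disjointness -/
lemma disj_of_isLUB {g c : E} {S : Set E} (hg : 0 ≤ g) (hne : S.Nonempty)
    (hS : ∀ z ∈ S, 0 ≤ z ∧ g ⊓ z = 0) (hlub : IsLUB S c) : g ⊓ c = 0 := by
  obtain ⟨z0, hz0⟩ := hne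
  have hc0 : 0 ≤ c := le_trans (hS z0 hz0).1 (hlub.1 hz0)
  have key : ∀ z ∈ S, z ≤ (g ⊔ c) - g := by
    intro z hz
    have h1 : g + z = g ⊔ z := by
      have := inf_add_sup g z
      rw [(hS z hz).2] at this
      rw [← this, zero_add]
    have h2 : g ⊔ z ≤ g ⊔ c := sup_le_sup_left (hlub.1 hz) g
    rw [← h1] at h2
    exact le_sub_iff_add_le'.2 h2
  have hc := hlub.2 key
  have h3 : g + c ≤ g ⊔ c := by
    have := add_le_add_right hc g
    rwa [add_sub_cancel] at this
  have h4 : g ⊓ c + (g ⊔ c) ≤ 0 + (g ⊔ c) := by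
    rw [inf_add_sup, zero_add]; exact h3
  have h5 : g ⊓ c ≤ 0 := le_of_add_le_add_right h4
  exact le_antisymm h5 (le_inf hg hc0)

end Infra

section DualBasics

variable {A : Type*} [CommRing A] [Lattice A] [Module ℝ A] [FAlg A]
variable {D : Type*} [AddCommGroup D] [Lattice D] [Module ℝ D] [RieszSp D]
variable {N : Type*} [CommRing N] [Lattice N] [Module ℝ N] [FAlg N]
variable [P : DualSetting A D N]

lemma dual_nonneg' {d : D} (hd : 0 ≤ d) {a : A} (ha : 0 ≤ a) : 0 ≤ P.dual d a :=
  (P.dual_order d).1 hd a ha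

lemma le_iff_dual {d e : D} : d ≤ e ↔ ∀ a : A, 0 ≤ a → P.dual d a ≤ P.dual e a := by
  constructor
  · intro h a ha
    have h1 : 0 ≤ e - d := sub_nonneg.2 h
    have h2 := (P.dual_order _).1 h1 a ha
    rw [map_sub, LinearMap.sub_apply] at h2
    linarith
  · intro h
    rw [← sub_nonneg]
    apply (P.dual_order _).2
    intro a ha
    rw [map_sub, LinearMap.sub_apply]
    have := h a ha
    linarith

lemma dual_mono_left {d e : D} (h : d ≤ e) {a : A} (ha : 0 ≤ a) :
    P.dual d a ≤ P.dual e a := le_iff_dual.1 h a ha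

lemma dual_mono_right {d : D} (hd : 0 ≤ d) {a b : A} (hab : a ≤ b) :
    P.dual d a ≤ P.dual d b := by
  have h1 := dual_nonneg' (P := P) hd (sub_nonneg.2 hab)
  rw [map_sub] at h1
  linarith

lemma dual_eq_of_pos {d e : D} (h : ∀ a : A, 0 ≤ a → P.dual d a = P.dual e a) : d = e := by
  apply P.dual_inj
  ext a
  have key : ∀ f : D, P.dual f a = P.dual f (a⁺) - P.dual f (a⁻) := by
    intro f
    rw [← map_sub, posPart_sub_negPart]
  rw [key d, key e, h _ (posPart_nonneg a), h _ (negPart_nonneg a)]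

lemma bidual_nonneg' {F : N} (hF : 0 ≤ F) {f : D} (hf : 0 ≤ f) : 0 ≤ P.bidual F f :=
  (P.bidual_order F).1 hF f hf

lemma le_iff_bidual {F G : N} : F ≤ G ↔ ∀ f : D, 0 ≤ f → P.bidual F f ≤ P.bidual G f := by
  constructor
  · intro h f hf
    have h1 : 0 ≤ G - F := sub_nonneg.2 h
    have h2 := (P.bidual_order _).1 h1 f hf
    rw [map_sub, LinearMap.sub_apply] at h2
    linarith
  · intro h
    rw [← sub_nonneg]
    apply (P.bidual_order _).2
    intro f hf
    rw [map_sub, LinearMap.sub_apply]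
    have := h f hf
    linarith

lemma bidual_mono_left {F G : N} (h : F ≤ G) {f : D} (hf : 0 ≤ f) :
    P.bidual F f ≤ P.bidual G f := le_iff_bidual.1 h f hf

lemma bidual_mono_right {F : N} (hF : 0 ≤ F) {f g : D} (hfg : f ≤ g) :
    P.bidual F f ≤ P.bidual F g := by
  have h1 := bidual_nonneg' (P := P) hF (sub_nonneg.2 hfg)
  rw [map_sub] at h1
  linarith

lemma bidual_eq_of_pos {F G : N} (h : ∀ f : D, 0 ≤ f → P.bidual F f = P.bidual G f) :
    F = G := by
  apply P.bidual_inj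
  ext f
  have key : ∀ H : N, P.bidual H f = P.bidual H (f⁺) - P.bidual H (f⁻) := by
    intro H
    rw [← map_sub, posPart_sub_negPart]
  rw [key F, key G, h _ (posPart_nonneg f), h _ (negPart_nonneg f)]

/-- `|φ x| ≤ φ |x|` for a positive functional -/
lemma abs_bidual_le {F : N} (hF : 0 ≤ F) (f : D) : |P.bidual F f| ≤ P.bidual F |f| := by
  rw [abs_le]
  constructor
  · have := bidual_mono_right (P := P) hF (neg_le_abs f)
    rw [map_neg] at this
    linarith
  · exact bidual_mono_right (P := P) hF (le_abs_self f)

/- ### algebraic lemmas for the actions -/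

lemma dsmul_add (a : A) (f g : D) : P.dsmul a (f + g) = P.dsmul a f + P.dsmul a g := by
  apply P.dual_inj; ext b
  simp only [P.dsmul_eval, map_add, LinearMap.add_apply, P.dsmul_eval]

lemma dsmul_sub (a : A) (f g : D) : P.dsmul a (f - g) = P.dsmul a f - P.dsmul a g := by
  apply P.dual_inj; ext b
  simp only [P.dsmul_eval, map_sub, LinearMap.sub_apply, P.dsmul_eval]

lemma dsmul_dsmul (a b : A) (f : D) : P.dsmul a (P.dsmul b f) = P.dsmul (a * b) f := by
  apply P.dual_inj; ext c
  rw [P.dsmul_eval, P.dsmul_eval, P.dsmul_eval, mul_assoc, mul_left_comm]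

lemma dsmul_nonneg {a : A} (ha : 0 ≤ a) {f : D} (hf : 0 ≤ f) : 0 ≤ P.dsmul a f := by
  apply (P.dual_order _).2
  intro b hb
  rw [P.dsmul_eval]
  exact dual_nonneg' hf (FAlg.mul_nonneg a b ha hb)

lemma dsmul_mono {a : A} (ha : 0 ≤ a) {f g : D} (h : f ≤ g) : P.dsmul a f ≤ P.dsmul a g := by
  have h1 : 0 ≤ P.dsmul a (g - f) := dsmul_nonneg ha (sub_nonneg.2 h)
  rw [dsmul_sub] at h1
  exact sub_nonneg.1 h1

lemma nsmul_addG (G H : N) (f : D) : P.nsmul (G + H) f = P.nsmul G f + P.nsmul H f := by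
  apply dual_eq_of_pos (P := P)
  intro a _
  rw [map_add, LinearMap.add_apply, P.nsmul_eval, P.nsmul_eval, P.nsmul_eval, map_add,
    LinearMap.add_apply]

lemma nsmul_subG (G H : N) (f : D) : P.nsmul (G - H) f = P.nsmul G f - P.nsmul H f := by
  apply dual_eq_of_pos (P := P)
  intro a _
  rw [map_sub, LinearMap.sub_apply, P.nsmul_eval, P.nsmul_eval, P.nsmul_eval, map_sub,
    LinearMap.sub_apply]

lemma nsmul_addf (G : N) (f g : D) : P.nsmul G (f + g) = P.nsmul G f + P.nsmul G g := by
  apply dual_eq_of_pos (P := P)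
  intro a _
  rw [map_add, LinearMap.add_apply, P.nsmul_eval, P.nsmul_eval, P.nsmul_eval, dsmul_add,
    map_add]

lemma nsmul_nonneg' {G : N} (hG : 0 ≤ G) {f : D} (hf : 0 ≤ f) : 0 ≤ P.nsmul G f := by
  apply (P.dual_order _).2
  intro a ha
  rw [P.nsmul_eval]
  exact bidual_nonneg' hG (dsmul_nonneg ha hf)

lemma nsmul_monoG {G H : N} (h : G ≤ H) {f : D} (hf : 0 ≤ f) :
    P.nsmul G f ≤ P.nsmul H f := by
  have h1 : 0 ≤ P.nsmul (H - G) f := nsmul_nonneg' (sub_nonneg.2 h) hf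
  rw [nsmul_subG] at h1
  exact sub_nonneg.1 h1

lemma nsmul_monof {G : N} (hG : 0 ≤ G) {f g : D} (h : f ≤ g) :
    P.nsmul G f ≤ P.nsmul G g := by
  have h0 : 0 ≤ g - f := sub_nonneg.2 h
  have h1 : 0 ≤ P.nsmul G (g - f) := nsmul_nonneg' hG h0
  have h2 : P.nsmul G (g - f) = P.nsmul G g - P.nsmul G f := by
    have := nsmul_addf (P := P) G (g - f) f
    rw [sub_add_cancel] at this
    rw [this]; abel
  rw [h2] at h1
  exact sub_nonneg.1 h1

lemma dsmul_nsmul_comm (a : A) (G : N) (f : D) :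
    P.dsmul a (P.nsmul G f) = P.nsmul G (P.dsmul a f) := by
  apply P.dual_inj; ext b
  rw [P.dsmul_eval, P.nsmul_eval, P.nsmul_eval, dsmul_dsmul, mul_comm a b]

lemma nsmul_mul (G H : N) (f : D) : P.nsmul (G * H) f = P.nsmul G (P.nsmul H f) := by
  apply dual_eq_of_pos (P := P)
  intro a _
  rw [P.nsmul_eval, P.nsmul_eval, P.mul_eval, dsmul_nsmul_comm]

end DualBasics

section Ext
variable {E : Type*} [AddCommGroup E] [Lattice E] [Module ℝ E] [RieszSp E]

lemma negPart_smul' {r : ℝ} (hr : 0 ≤ r) (x : E) : (r • x)⁻ = r • x⁻ := by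
  rw [negPart_def, negPart_def, ← smul_neg, ← posPart_def, ← posPart_def, posPart_smul hr]

lemma posPart_neg' (x : E) : (-x)⁺ = x⁻ := by rw [posPart_def, negPart_def]

lemma negPart_neg' (x : E) : (-x)⁻ = x⁺ := by rw [negPart_def, posPart_def, neg_neg]

lemma ext_linear (p : E → ℝ)
    (hadd : ∀ u v : E, 0 ≤ u → 0 ≤ v → p (u + v) = p u + p v)
    (hsmul : ∀ (r : ℝ) (u : E), 0 ≤ r → 0 ≤ u → p (r • u) = r * p u) :
    ∃ ℓ : E →ₗ[ℝ] ℝ, ∀ u : E, ℓ u = p (u⁺) - p (u⁻) := by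
  have hid : ∀ u v : E, (u + v)⁺ + (u⁻ + v⁻) = (u + v)⁻ + (u⁺ + v⁺) := by
    intro u v
    have h1 : (u+v)⁺ = (u+v) + (u+v)⁻ := eq_add_of_sub_eq (posPart_sub_negPart _)
    have h2 : u⁺ = u + u⁻ := eq_add_of_sub_eq (posPart_sub_negPart _)
    have h3 : v⁺ = v + v⁻ := eq_add_of_sub_eq (posPart_sub_negPart _)
    rw [h1, h2, h3]; abel
  have haddl : ∀ u v : E, p ((u + v)⁺) - p ((u+v)⁻)
      = (p (u⁺) - p (u⁻)) + (p (v⁺) - p (v⁻)) := by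
    intro u v
    have h := congrArg p (hid u v)
    rw [hadd _ _ (posPart_nonneg _) (add_nonneg (negPart_nonneg _) (negPart_nonneg _)),
      hadd _ _ (negPart_nonneg _) (negPart_nonneg _),
      hadd _ _ (negPart_nonneg _) (add_nonneg (posPart_nonneg _) (posPart_nonneg _)),
      hadd _ _ (posPart_nonneg _) (posPart_nonneg _)] at h
    linarith
  have hsml : ∀ (r : ℝ) (u : E), p ((r • u)⁺) - p ((r • u)⁻) = r * (p (u⁺) - p (u⁻)) := by
    intro r u
    rcases le_or_gt 0 r with hr | hr
    · rw [posPart_smul hr, negPart_smul' hr, hsmul _ _ hr (posPart_nonneg _),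
        hsmul _ _ hr (negPart_nonneg _)]
      ring
    · have h0 : r • u = (-r) • (-u) := by rw [neg_smul_neg]
      rw [h0, posPart_smul (by linarith), negPart_smul' (by linarith), posPart_neg',
        negPart_neg', hsmul _ _ (by linarith) (negPart_nonneg _),
        hsmul _ _ (by linarith) (posPart_nonneg _)]
      ring
  refine ⟨{ toFun := fun u => p (u⁺) - p (u⁻),
            map_add' := haddl,
            map_smul' := by intro r u; simp only [RingHom.id_apply, smul_eq_mul]; exact hsml r u },
         fun u => rfl⟩

end Ext

section Sup
open Pointwise
variable {A : Type*} [CommRing A] [Lattice A] [Module ℝ A] [FAlg A]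
variable {D : Type*} [AddCommGroup D] [Lattice D] [Module ℝ D] [RieszSp D]
variable {N : Type*} [CommRing N] [Lattice N] [Module ℝ N] [FAlg N]
variable [P : DualSetting A D N]

/-- existence of suprema of bounded directed sets in `D`, with pointwise values -/
lemma exists_isLUB {S : Set D} (hne : S.Nonempty) (hdir : DirectedOn (· ≤ ·) S)
    (hbdd : BddAbove S) :
    ∃ z : D, IsLUB S z ∧ ∀ a : A, 0 ≤ a → P.dual z a = sSup ((fun y => P.dual y a) '' S) := by
  obtain ⟨B, hB⟩ := hbdd
  obtain ⟨y0, hy0⟩ := hne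
  set p : A → ℝ := fun a => sSup ((fun y => P.dual y a) '' S) with hp
  have hbddim : ∀ a : A, 0 ≤ a → BddAbove ((fun y => P.dual y a) '' S) := by
    intro a ha
    exact ⟨P.dual B a, by rintro _ ⟨y, hy, rfl⟩; exact dual_mono_left (hB hy) ha⟩
  have hneim : ∀ a : A, ((fun y => P.dual y a) '' S).Nonempty := fun a => ⟨_, ⟨y0, hy0, rfl⟩⟩
  have hple : ∀ (a : A), 0 ≤ a → ∀ y ∈ S, P.dual y a ≤ p a := by
    intro a ha y hy
    exact le_csSup (hbddim a ha) ⟨y, hy, rfl⟩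
  have hplub : ∀ (a : A), 0 ≤ a → ∀ M : ℝ, (∀ y ∈ S, P.dual y a ≤ M) → p a ≤ M := by
    intro a _ M hM
    exact csSup_le (hneim a) (by rintro _ ⟨y, hy, rfl⟩; exact hM y hy)
  have hadd : ∀ u v : A, 0 ≤ u → 0 ≤ v → p (u + v) = p u + p v := by
    intro u v hu hv
    have h1 : p (u + v) ≤ p u + p v := by
      apply hplub _ (by positivity)
      intro y hy
      rw [map_add]
      exact add_le_add (hple u hu y hy) (hple v hv y hy)
    have h2 : p u + p v ≤ p (u + v) := by
      have step : ∀ y1 ∈ S, ∀ y2 ∈ S, P.dual y1 u + P.dual y2 v ≤ p (u + v) := by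
        intro y1 hy1 y2 hy2
        obtain ⟨y3, hy3, h13, h23⟩ := hdir y1 hy1 y2 hy2
        calc P.dual y1 u + P.dual y2 v ≤ P.dual y3 u + P.dual y3 v :=
              add_le_add (dual_mono_left h13 hu) (dual_mono_left h23 hv)
          _ = P.dual y3 (u + v) := by rw [map_add]
          _ ≤ p (u + v) := hple _ (by positivity) y3 hy3
      have h3 : ∀ y1 ∈ S, P.dual y1 u + p v ≤ p (u + v) := by
        intro y1 hy1
        have : p v ≤ p (u+v) - P.dual y1 u :=
          hplub v hv _ (fun y2 hy2 => by linarith [step y1 hy1 y2 hy2])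
        linarith
      have : p u ≤ p (u+v) - p v :=
        hplub u hu _ (fun y1 hy1 => by linarith [h3 y1 hy1])
      linarith
    linarith
  have hsmul : ∀ (r : ℝ) (u : A), 0 ≤ r → 0 ≤ u → p (r • u) = r * p u := by
    intro r u hr hu
    have him : (fun y => P.dual y (r • u)) '' S = r • ((fun y => P.dual y u) '' S) := by
      have hfun : (fun y : D => P.dual y (r • u)) = (fun t : ℝ => r • t) ∘ (fun y => P.dual y u) := by
        funext y
        simp [map_smul]
      rw [hfun, Set.image_comp, Set.image_smul]
    rw [hp]
    simp only
    rw [him, Real.sSup_smul_of_nonneg hr, smul_eq_mul]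
  obtain ⟨ℓ, hℓ⟩ := ext_linear p hadd hsmul
  have hp0 : p 0 = 0 := by
    have := hsmul 0 0 le_rfl le_rfl
    simpa using this
  have hbddfn : OrderBddFn ℓ := by
    intro a b
    obtain ⟨M1, hM1⟩ := P.dual_bdd B 0 (b⁺)
    obtain ⟨M2, hM2⟩ := P.dual_bdd y0 0 (b⁺)
    obtain ⟨M3, hM3⟩ := P.dual_bdd B 0 (a⁻)
    obtain ⟨M4, hM4⟩ := P.dual_bdd y0 0 (a⁻)
    refine ⟨M1 + M2 + (M3 + M4), ?_⟩
    intro x hax hxb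
    have hb0 : (0:A) ≤ b⁺ := posPart_nonneg b
    have ha0 : (0:A) ≤ a⁻ := negPart_nonneg a
    have hxp1 : (0:A) ≤ x⁺ := posPart_nonneg x
    have hxp2 : x⁺ ≤ b⁺ := posPart_mono hxb
    have hxn1 : (0:A) ≤ x⁻ := negPart_nonneg x
    have hxn2 : x⁻ ≤ a⁻ := negPart_anti hax
    have e1 := hM1 _ hxp1 hxp2
    have e2 := hM2 _ hxp1 hxp2
    have e3 := hM3 _ hxn1 hxn2
    have e4 := hM4 _ hxn1 hxn2
    have hup : p (x⁺) ≤ M1 := le_trans (hplub _ hxp1 _ (fun y hy =>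
        le_trans (dual_mono_left (hB hy) hxp1) (le_of_abs_le (hM1 _ hxp1 hxp2)))) le_rfl
    have hlo : -M2 ≤ p (x⁺) := by
      have := hple _ hxp1 y0 hy0
      have h2 := abs_le.1 e2
      linarith
    have hup' : p (x⁻) ≤ M3 := hplub _ hxn1 _ (fun y hy =>
        le_trans (dual_mono_left (hB hy) hxn1) (le_of_abs_le (hM3 _ hxn1 hxn2)))
    have hlo' : -M4 ≤ p (x⁻) := by
      have := hple _ hxn1 y0 hy0
      have h4 := abs_le.1 e4
      linarith
    rw [hℓ]
    rw [abs_le]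
    constructor <;> [skip; skip] <;> nlinarith [abs_nonneg (P.dual B x⁺), abs_le.1 e1,
      abs_le.1 e2, abs_le.1 e3, abs_le.1 e4]
  obtain ⟨z, hz⟩ := P.dual_surj ℓ hbddfn
  have hzval : ∀ a : A, 0 ≤ a → P.dual z a = p a := by
    intro a ha
    rw [hz, hℓ, posPart_eq_self.2 ha, negPart_eq_zero.2 ha, hp0]
    ring
  refine ⟨z, ⟨?_, ?_⟩, hzval⟩
  · intro y hy
    rw [le_iff_dual (P := P)]
    intro a ha
    rw [hzval a ha]
    exact hple a ha y hy
  · intro w hw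
    rw [le_iff_dual (P := P)]
    intro a ha
    rw [hzval a ha]
    exact hplub a ha _ (fun y hy => dual_mono_left (hw hy) ha)

/-- evaluations along a directed set with infimum `0` tend to `0` -/
lemma glb_eval {s : Set D} (hne : s.Nonempty) (hdir : DirectedOn (· ≥ ·) s)
    (hglb : IsGLB s 0) {a : A} (ha : 0 ≤ a) {ε : ℝ} (hε : 0 < ε) :
    ∃ d ∈ s, P.dual d a < ε := by
  have hdir' : DirectedOn (· ≤ ·) ((fun x => -x) '' s) := by
    rintro _ ⟨x, hx, rfl⟩ _ ⟨y, hy, rfl⟩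
    obtain ⟨w, hw, hw1, hw2⟩ := hdir x hx y hy
    exact ⟨-w, ⟨w, hw, rfl⟩, neg_le_neg_iff.2 hw1, neg_le_neg_iff.2 hw2⟩
  have hbdd : BddAbove ((fun x => -x) '' s) := by
    refine ⟨0, ?_⟩
    rintro _ ⟨x, hx, rfl⟩
    simpa using hglb.1 hx
  obtain ⟨z, hzlub, hzval⟩ := exists_isLUB (P := P) (hne.image _) hdir' hbdd
  have hz0 : z = 0 := hzlub.unique (by simpa using (isLUB_negimg hglb))
  have : sSup ((fun y => P.dual y a) '' ((fun x => -x) '' s)) = 0 := by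
    rw [← hzval a ha, hz0, map_zero, LinearMap.zero_apply]
  have hlt : ∃ r ∈ ((fun y => P.dual y a) '' ((fun x => -x) '' s)), -ε < r := by
    apply exists_lt_of_lt_csSup ((hne.image _).image _)
    rw [this]; linarith
  obtain ⟨r, ⟨_, ⟨x, hx, rfl⟩, rfl⟩, hr⟩ := hlt
  refine ⟨x, hx, ?_⟩
  simp only [map_neg, LinearMap.neg_apply] at hr
  linarith

end Sup

section Hat
variable {E : Type*} [AddCommGroup E] [Lattice E] [Module ℝ E] [RieszSp E]

lemma nsmul_nonneg'' {x : E} (hx : 0 ≤ x) (m : ℕ) : 0 ≤ m • x := by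
  induction m with
  | zero => simp
  | succ k ih => rw [succ_nsmul]; exact add_nonneg ih hx

end Hat

section Hat2
variable {A : Type*} [CommRing A] [Lattice A] [Module ℝ A] [FAlg A]
variable {D : Type*} [AddCommGroup D] [Lattice D] [Module ℝ D] [RieszSp D]
variable {N : Type*} [CommRing N] [Lattice N] [Module ℝ N] [FAlg N]
variable [P : DualSetting A D N]

lemma exists_hat (a : A) : ∃ ha : N, ∀ f : D, P.bidual ha f = P.dual f a := by
  set φ0 : D →ₗ[ℝ] ℝ :=
    { toFun := fun f => P.dual f a,
      map_add' := by
        intro f g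
        show P.dual (f + g) a = P.dual f a + P.dual g a
        rw [map_add, LinearMap.add_apply],
      map_smul' := by
        intro r f
        show P.dual (r • f) a = r • (P.dual f a)
        rw [map_smul, LinearMap.smul_apply] } with hφ0
  have hbdd : OrderBddFn φ0 := by
    intro u v
    refine ⟨|P.dual u (a⁺)| + |P.dual v (a⁺)| + (|P.dual u (a⁻)| + |P.dual v (a⁻)|), ?_⟩
    intro f huf hfv
    have hp : P.dual f (a⁺) ≤ P.dual v (a⁺) := dual_mono_left hfv (posPart_nonneg a)
    have hp' : P.dual u (a⁺) ≤ P.dual f (a⁺) := dual_mono_left huf (posPart_nonneg a)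
    have hn : P.dual f (a⁻) ≤ P.dual v (a⁻) := dual_mono_left hfv (negPart_nonneg a)
    have hn' : P.dual u (a⁻) ≤ P.dual f (a⁻) := dual_mono_left huf (negPart_nonneg a)
    have key : φ0 f = P.dual f (a⁺) - P.dual f (a⁻) := by
      rw [hφ0]; simp only [LinearMap.coe_mk, AddHom.coe_mk]
      rw [← map_sub, posPart_sub_negPart]
    have A1 := le_abs_self (P.dual u (a⁺)); have A2 := neg_abs_le (P.dual u (a⁺))
    have B1 := le_abs_self (P.dual v (a⁺)); have B2 := neg_abs_le (P.dual v (a⁺))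
    have C1 := le_abs_self (P.dual u (a⁻)); have C2 := neg_abs_le (P.dual u (a⁻))
    have D1 := le_abs_self (P.dual v (a⁻)); have D2 := neg_abs_le (P.dual v (a⁻))
    rw [key, abs_le]
    constructor <;> linarith
  have hcont : OrdContFn φ0 := by
    intro s hne hdir hglb ε hε
    obtain ⟨d1, hd1, hv1⟩ := glb_eval (P := P) hne hdir hglb (posPart_nonneg a) (half_pos hε)
    obtain ⟨d2, hd2, hv2⟩ := glb_eval (P := P) hne hdir hglb (negPart_nonneg a) (half_pos hε)
    obtain ⟨d, hd, hdd1, hdd2⟩ := hdir d1 hd1 d2 hd2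
    refine ⟨d, hd, ?_⟩
    intro d' hd' hdle
    have h0 : (0 : D) ≤ d' := hglb.1 hd'
    have key : φ0 d' = P.dual d' (a⁺) - P.dual d' (a⁻) := by
      rw [hφ0]; simp only [LinearMap.coe_mk, AddHom.coe_mk]
      rw [← map_sub, posPart_sub_negPart]
    have l1 : P.dual d' (a⁺) ≤ P.dual d1 (a⁺) :=
      dual_mono_left (le_trans hdle hdd1) (posPart_nonneg a)
    have l2 : P.dual d' (a⁻) ≤ P.dual d2 (a⁻) :=
      dual_mono_left (le_trans hdle hdd2) (negPart_nonneg a)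
    have g1 : 0 ≤ P.dual d' (a⁺) := dual_nonneg' h0 (posPart_nonneg a)
    have g2 : 0 ≤ P.dual d' (a⁻) := dual_nonneg' h0 (negPart_nonneg a)
    rw [key, abs_lt]
    constructor <;> linarith
  obtain ⟨ha, hha⟩ := P.bidual_surj φ0 hbdd hcont
  exact ⟨ha, fun f => by rw [hha]; rfl⟩

/-- the canonical image of `A` inside `N` -/
def hatN (a : A) : N := Classical.choose (exists_hat (P := P) a)

lemma hatN_eval (a : A) (f : D) : P.bidual (hatN (P := P) a) f = P.dual f a :=
  Classical.choose_spec (exists_hat (P := P) a) f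

lemma hatN_nonneg {a : A} (ha : 0 ≤ a) : 0 ≤ hatN (P := P) a := by
  apply (P.bidual_order _).2
  intro f hf
  rw [hatN_eval]
  exact dual_nonneg' hf ha

lemma nsmul_hat (a : A) (f : D) : P.nsmul (hatN (P := P) a) f = P.dsmul a f := by
  apply dual_eq_of_pos (P := P)
  intro b _
  rw [P.nsmul_eval, hatN_eval, P.dsmul_eval, P.dsmul_eval, mul_comm]

lemma bidual_sep {f g : D} (h : ∀ G : N, P.bidual G f = P.bidual G g) : f = g := by
  apply P.dual_inj
  ext a
  have := h (hatN (P := P) a)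
  rwa [hatN_eval, hatN_eval] at this

lemma nsmul_one' (f : D) : P.nsmul 1 f = f := by
  apply bidual_sep (P := P)
  intro G
  rw [← P.mul_eval, mul_one]

/-- disjoint positive elements of the f-algebra `N` multiply to zero -/
lemma disj_mul_zero {a b : N} (ha : 0 ≤ a) (hb : 0 ≤ b) (h : a ⊓ b = 0) : a * b = 0 := by
  have hxb : (a * b) ⊓ b = 0 := by
    have := FAlg.disjoint_mul a b b h hb
    rwa [mul_comm] at this
  have hxa : (a * b) ⊓ a = 0 := by
    have h' : b ⊓ a = 0 := by rwa [inf_comm] at h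
    exact FAlg.disjoint_mul b a a h' ha
  set x := a * b with hx
  have hx0 : 0 ≤ x := FAlg.mul_nonneg a b ha hb
  set u := a ⊔ b with hu
  have hu0 : (0:N) ≤ u := le_trans ha le_sup_left
  have huab : u ≤ a + b := sup_le (le_add_of_nonneg_right hb) (le_add_of_nonneg_left ha)
  have hxu : x ⊓ u = 0 := by
    have h1 : x ⊓ u ≤ x ⊓ (a + b) := inf_le_inf_left x huab
    have h2 : x ⊓ (a + b) ≤ x ⊓ a + x ⊓ b := inf_add_le' hx0 ha hb
    rw [hxa, hxb] at h2
    exact le_antisymm (by simpa using le_trans h1 h2) (le_inf hx0 hu0)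
  have hxuu : x ≤ u * u := by
    calc x = a * b := hx
      _ ≤ u * b := by
          have : 0 ≤ (u - a) * b := FAlg.mul_nonneg _ _ (sub_nonneg.2 le_sup_left) hb
          rw [sub_mul] at this
          exact sub_nonneg.1 this
      _ ≤ u * u := by
          have : 0 ≤ u * (u - b) := FAlg.mul_nonneg _ _ hu0 (sub_nonneg.2 le_sup_right)
          rw [mul_sub] at this
          exact sub_nonneg.1 this
  have huux : (u * u) ⊓ x = 0 := by
    have h' : u ⊓ x = 0 := by rwa [inf_comm] at hxu
    exact FAlg.disjoint_mul u x u h' hu0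
  have : x = x ⊓ (u * u) := (inf_eq_left.2 hxuu).symm
  rw [this, inf_comm]
  exact huux

lemma one_nonneg_N : (0 : N) ≤ 1 := by
  have hd : (1:N)⁺ ⊓ (1:N)⁻ = 0 := posPart_inf_negPart_eq_zero 1
  have hz : (1:N)⁺ * (1:N)⁻ = 0 := disj_mul_zero (posPart_nonneg 1) (negPart_nonneg 1) hd
  have h1 : (1:N)⁻ = (1:N)⁻ * ((1:N)⁺ - (1:N)⁻) := by rw [posPart_sub_negPart, mul_one]
  have h2 : (1:N)⁻ = - ((1:N)⁻ * (1:N)⁻) := by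
    conv_lhs => rw [h1]
    rw [mul_sub, mul_comm ((1:N)⁻) ((1:N)⁺), hz, zero_sub]
  have h3 : (1:N)⁻ ≤ 0 := by
    rw [h2, neg_nonpos]
    exact FAlg.mul_nonneg _ _ (negPart_nonneg 1) (negPart_nonneg 1)
  have h4 : (1:N)⁻ = 0 := le_antisymm h3 (negPart_nonneg 1)
  have := posPart_sub_negPart (1:N)
  rw [h4, sub_zero] at this
  rw [← this]
  exact posPart_nonneg 1

/-- the key absolute-continuity property: the action of `N⁺` preserves disjointness in `D` -/
lemma nabs {G : N} (hG : 0 ≤ G) {x σ : D} (hx : 0 ≤ x) (hσ : 0 ≤ σ) (h : x ⊓ σ = 0) :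
    (P.nsmul G x) ⊓ σ = 0 := by
  set t0 := (P.nsmul G x) ⊓ σ with ht0
  have ht00 : 0 ≤ t0 := le_inf (nsmul_nonneg' hG hx) hσ
  have key : ∀ m : ℕ, ∀ a : A, 0 ≤ a →
      (m : ℝ) * P.dual t0 a ≤ P.bidual (G * G) (P.dsmul a x) := by
    intro m a ha
    set Gm := G ⊓ (m • (1:N)) with hGmdef
    set um := (G - m • (1:N))⁺ with humdef
    have hsplit : G - Gm = um := sub_inf_eq_posPart G (m • (1:N))
    have hGm0 : 0 ≤ Gm := le_inf hG (nsmul_nonneg'' one_nonneg_N m)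
    have hum0 : 0 ≤ um := posPart_nonneg _
    have hGsum : Gm + um = G := by rw [← hsplit]; abel
    have hcast : (m • (1:N)) = (m:ℝ) • (1:N) := (Nat.cast_smul_eq_nsmul ℝ m 1).symm
    -- `nsmul Gm x ≤ m • x`
    have hym : P.nsmul Gm x ≤ (m:ℝ) • x := by
      rw [le_iff_dual (P := P)]
      intro b hb
      rw [P.nsmul_eval]
      have h1 : P.bidual Gm (P.dsmul b x) ≤ P.bidual (m • (1:N)) (P.dsmul b x) :=
        bidual_mono_left inf_le_right (dsmul_nonneg hb hx)
      have h2 : P.bidual (m • (1:N)) (P.dsmul b x) = (m : ℝ) * P.dual x b := by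
        rw [hcast, map_smul, LinearMap.smul_apply, smul_eq_mul]
        rw [← P.nsmul_eval, nsmul_one']
      have h3 : P.dual ((m:ℝ) • x) b = (m:ℝ) * P.dual x b := by
        rw [map_smul, LinearMap.smul_apply, smul_eq_mul]
      rw [h3]
      linarith
    have hym0 : 0 ≤ P.nsmul Gm x := nsmul_nonneg' hGm0 hx
    -- disjointness of the small part from σ
    have hdisj : (P.nsmul Gm x) ⊓ σ = 0 := by
      have hmx : ((m:ℝ) • x) ⊓ σ = 0 := by
        rw [inf_comm]
        rw [inf_comm] at h
        exact disj_nsmul hσ hx h m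
      refine le_antisymm ?_ (le_inf hym0 hσ)
      rw [← hmx]
      exact inf_le_inf hym le_rfl
    -- hence `t0 ≤ nsmul um x`
    have hsplitx : P.nsmul G x = P.nsmul Gm x + P.nsmul um x := by
      rw [← nsmul_addG, hGsum]
    have ht0um : t0 ≤ P.nsmul um x := by
      have h1 : t0 - P.nsmul um x ≤ P.nsmul Gm x := by
        have : t0 ≤ P.nsmul G x := inf_le_left
        rw [hsplitx] at this
        exact sub_le_iff_le_add.2 this
      have h2 : (t0 - P.nsmul um x)⁺ ≤ P.nsmul Gm x := by
        rw [posPart_def]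
        exact sup_le h1 hym0
      have h3 : (t0 - P.nsmul um x)⁺ ≤ σ := by
        have h31 : t0 - P.nsmul um x ≤ t0 :=
          sub_le_self _ (nsmul_nonneg' hum0 hx)
        calc (t0 - P.nsmul um x)⁺ ≤ t0⁺ := posPart_mono h31
          _ = t0 := posPart_eq_self.2 ht00
          _ ≤ σ := inf_le_right
      have h4 : (t0 - P.nsmul um x)⁺ ≤ 0 := by
        calc (t0 - P.nsmul um x)⁺ ≤ (P.nsmul Gm x) ⊓ σ := le_inf h2 h3
          _ = 0 := hdisj
      have h5 : (t0 - P.nsmul um x)⁺ = 0 := le_antisymm h4 (posPart_nonneg _)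
      exact sub_nonpos.1 (posPart_eq_zero.1 h5)
    -- the `N`-side estimate `m • um ≤ G * G`
    have humG : um ≤ G := by
      have h1 : G - m • (1:N) ≤ G :=
        sub_le_self _ (nsmul_nonneg'' one_nonneg_N m)
      calc um = (G - m • (1:N))⁺ := humdef
        _ ≤ G⁺ := posPart_mono h1
        _ = G := posPart_eq_self.2 hG
    have hNest : (m:ℝ) • um ≤ G * G := by
      set qm := (G - m • (1:N))⁻ with hqm
      have hdisj2 : um ⊓ qm = 0 := posPart_inf_negPart_eq_zero _
      have hprod : um * qm = 0 :=
        disj_mul_zero hum0 (negPart_nonneg _) hdisj2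
      have hdecomp : G - m • (1:N) = um - qm := (posPart_sub_negPart _).symm
      have hcalc : um * G - um * (m • (1:N)) = um * um := by
        have : um * (G - m • (1:N)) = um * um - um * qm := by
          rw [hdecomp, mul_sub]
        rw [hprod, sub_zero] at this
        rw [← this, mul_sub]
      have hmul1 : um * (m • (1:N)) = (m:ℝ) • um := by
        rw [nsmul_eq_mul, mul_one, mul_comm, ← nsmul_eq_mul, Nat.cast_smul_eq_nsmul]
      have hsq : 0 ≤ um * um := FAlg.mul_nonneg _ _ hum0 hum0
      have h1 : (m:ℝ) • um ≤ um * G := by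
        rw [← hmul1]
        exact sub_nonneg.1 (by rw [hcalc]; exact hsq)
      have h2 : um * G ≤ G * G := by
        have : 0 ≤ (G - um) * G := FAlg.mul_nonneg _ _ (sub_nonneg.2 humG) hG
        rw [sub_mul] at this
        exact sub_nonneg.1 this
      exact le_trans h1 h2
    -- evaluate
    have e1 : P.dual t0 a ≤ P.dual (P.nsmul um x) a := dual_mono_left ht0um ha
    have e2 : P.dual (P.nsmul um x) a = P.bidual um (P.dsmul a x) := P.nsmul_eval um x a
    have e3 : (m:ℝ) * P.bidual um (P.dsmul a x) ≤ P.bidual (G * G) (P.dsmul a x) := by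
      have := bidual_mono_left (P := P) hNest (dsmul_nonneg (P := P) ha hx)
      rwa [map_smul, LinearMap.smul_apply, smul_eq_mul] at this
    rcases Nat.eq_zero_or_pos m with hm | hm
    · subst hm
      simp only [Nat.cast_zero, zero_mul]
      exact bidual_nonneg' (P := P) (FAlg.mul_nonneg G G hG hG) (dsmul_nonneg (P := P) ha hx)
    · have hm' : (0:ℝ) < m := by exact_mod_cast hm
      nlinarith [dual_nonneg' (P := P) ht00 ha]
  -- conclude `t0 = 0` by the Archimedean property of `ℝ`
  apply dual_eq_of_pos (P := P)
  intro a ha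
  rw [map_zero, LinearMap.zero_apply]
  by_contra hne
  have hpos : 0 < P.dual t0 a := lt_of_le_of_ne (dual_nonneg' (P := P) ht00 ha) (Ne.symm hne)
  obtain ⟨m, hm⟩ := exists_nat_gt (P.bidual (G * G) (P.dsmul a x) / P.dual t0 a)
  have := key m a ha
  rw [div_lt_iff₀ hpos] at hm
  linarith

end Hat2

section QOps
variable {E : Type*} [AddCommGroup E] [Lattice E] [Module ℝ E] [RieszSp E]

lemma smul_le_smul_sc {r s : ℝ} (h : r ≤ s) {y : E} (hy : 0 ≤ y) : r • y ≤ s • y := by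
  have : 0 ≤ (s - r) • y := RieszSp.smul_nonneg _ _ (by linarith) hy
  rw [sub_smul] at this
  exact sub_nonneg.1 this

lemma rsmul_inf {r : ℝ} (hr : 0 < r) (x y : E) : r • (x ⊓ y) = (r • x) ⊓ (r • y) := by
  have h0 : -(x ⊓ y) = (-x) ⊔ (-y) := neg_inf x y
  have h1 : x ⊓ y = -((-x) ⊔ (-y)) := by rw [← h0, neg_neg]
  rw [h1, smul_neg, rsmul_sup hr, smul_neg, smul_neg, ← neg_inf, neg_neg]

end QOps

section QEl
variable {A : Type*} [CommRing A] [Lattice A] [Module ℝ A] [FAlg A]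
variable {D : Type*} [AddCommGroup D] [Lattice D] [Module ℝ D] [RieszSp D]
variable {N : Type*} [CommRing N] [Lattice N] [Module ℝ N] [FAlg N]
variable [P : DualSetting A D N]

/-- the approximating family for the band projection onto the band of `x` -/
def Qfam (x g : D) : Set D := Set.range (fun m : ℕ => g⁺ ⊓ ((m:ℝ) • x⁺))

lemma Qfam_ne (x g : D) : (Qfam x g).Nonempty := ⟨_, ⟨0, rfl⟩⟩

lemma Qfam_mono (x g : D) {m m' : ℕ} (h : m ≤ m') :
    g⁺ ⊓ ((m:ℝ) • x⁺) ≤ g⁺ ⊓ ((m':ℝ) • x⁺) :=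
  inf_le_inf_left _ (smul_le_smul_sc (by exact_mod_cast h) (posPart_nonneg x))

lemma Qfam_dir (x g : D) : DirectedOn (· ≤ ·) (Qfam x g) := by
  rintro _ ⟨m, rfl⟩ _ ⟨m', rfl⟩
  exact ⟨g⁺ ⊓ (((max m m' : ℕ):ℝ) • x⁺), ⟨max m m', rfl⟩,
    Qfam_mono x g (le_max_left _ _), Qfam_mono x g (le_max_right _ _)⟩

lemma Qfam_bdd (x g : D) : BddAbove (Qfam x g) :=
  ⟨g⁺, by rintro _ ⟨m, rfl⟩; exact inf_le_left⟩

/-- the band projection of `g` onto the band generated by `x` -/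
def QEl (x g : D) : D :=
  (exists_isLUB (P := P) (Qfam_ne x g) (Qfam_dir x g) (Qfam_bdd x g)).choose

lemma QEl_isLUB (x g : D) : IsLUB (Qfam x g) (QEl (P := P) x g) :=
  (exists_isLUB (P := P) (Qfam_ne x g) (Qfam_dir x g) (Qfam_bdd x g)).choose_spec.1

lemma QEl_nonneg (x g : D) : 0 ≤ QEl (P := P) x g := by
  have h := (QEl_isLUB (P := P) x g).1 ⟨0, rfl⟩
  simp only [Nat.cast_zero, zero_smul] at h
  rwa [inf_eq_right.2 (posPart_nonneg g)] at h

lemma QEl_le {x g : D} (hg : 0 ≤ g) : QEl (P := P) x g ≤ g := by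
  apply (QEl_isLUB (P := P) x g).2
  rintro _ ⟨m, rfl⟩
  rw [posPart_eq_self.2 hg]
  exact inf_le_left

lemma QEl_self {x : D} (hx : 0 ≤ x) : QEl (P := P) x x = x := by
  refine le_antisymm (QEl_le (P := P) hx) ?_
  have h1 := (QEl_isLUB (P := P) x x).1 ⟨1, rfl⟩
  simpa [posPart_eq_self.2 hx] using h1

lemma QEl_zero_of_disj {x g : D} (hx : 0 ≤ x) (hg : 0 ≤ g) (h : g ⊓ x = 0) :
    QEl (P := P) x g = 0 := by
  have hall : ∀ y ∈ Qfam x g, y = 0 := by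
    rintro _ ⟨m, rfl⟩
    rw [posPart_eq_self.2 hg, posPart_eq_self.2 hx]
    exact disj_nsmul hg hx h m
  refine le_antisymm ((QEl_isLUB (P := P) x g).2 ?_) (QEl_nonneg x g)
  intro y hy
  rw [hall y hy]

lemma QEl_mono {x f g : D} (hf : 0 ≤ f) (h : f ≤ g) :
    QEl (P := P) x f ≤ QEl (P := P) x g := by
  apply (QEl_isLUB (P := P) x f).2
  rintro _ ⟨m, rfl⟩
  exact le_trans (inf_le_inf (posPart_mono h) le_rfl) ((QEl_isLUB (P := P) x g).1 ⟨m, rfl⟩)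

/-- the complementary part is disjoint from `x` -/
lemma QEl_compl_disj {x g : D} (hx : 0 ≤ x) (hg : 0 ≤ g) :
    (g - QEl (P := P) x g) ⊓ x = 0 := by
  set Q := QEl (P := P) x g with hQ
  set t := (g - Q) ⊓ x with htdef
  have hQg : Q ≤ g := QEl_le (P := P) hg
  have ht0 : 0 ≤ t := le_inf (sub_nonneg.2 hQg) hx
  have key : ∀ m : ℕ, g⁺ ⊓ ((m:ℝ) • x⁺) ≤ Q - t := by
    intro m
    rw [posPart_eq_self.2 hg, posPart_eq_self.2 hx]
    have hmem : g ⊓ (((m+1 : ℕ):ℝ) • x) ≤ Q := by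
      have h := (QEl_isLUB (P := P) x g).1 ⟨m+1, rfl⟩
      rwa [posPart_eq_self.2 hg, posPart_eq_self.2 hx] at h
    have h1 : t + g ⊓ ((m:ℝ) • x) ≤ g := by
      have e1 : t ≤ g - Q := inf_le_left
      have e2 : g ⊓ ((m:ℝ) • x) ≤ Q := by
        have h := (QEl_isLUB (P := P) x g).1 ⟨m, rfl⟩
        rwa [posPart_eq_self.2 hg, posPart_eq_self.2 hx] at h
      calc t + g ⊓ ((m:ℝ) • x) ≤ (g - Q) + Q := add_le_add e1 e2
        _ = g := by abel
    have h2 : t + g ⊓ ((m:ℝ) • x) ≤ ((m+1 : ℕ):ℝ) • x := by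
      have e1 : t ≤ x := inf_le_right
      have e2 : g ⊓ ((m:ℝ) • x) ≤ (m:ℝ) • x := inf_le_right
      have e4 : ((m+1:ℕ):ℝ) • x = (m:ℝ) • x + x := by
        push_cast
        rw [add_smul, one_smul]
      rw [e4]
      calc t + g ⊓ ((m:ℝ) • x) ≤ x + (m:ℝ) • x := add_le_add e1 e2
        _ = (m:ℝ) • x + x := by abel
    have h4 : t + g ⊓ ((m:ℝ) • x) ≤ Q := le_trans (le_inf h1 h2) hmem
    exact le_sub_iff_add_le'.2 h4
  have hub : Q ≤ Q - t := (QEl_isLUB (P := P) x g).2 (by rintro _ ⟨m, rfl⟩; exact key m)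
  have ht : t ≤ 0 := (add_le_iff_nonpos_right Q).1 (le_sub_iff_add_le.1 hub)
  exact le_antisymm ht ht0

/-- elements of the band are disjoint from anything disjoint from `x` -/
lemma QEl_band_disj {x y w : D} (hx : 0 ≤ x) (hy : 0 ≤ y) (hw : 0 ≤ w)
    (hyband : QEl (P := P) x y = y) (hwx : w ⊓ x = 0) : w ⊓ y = 0 := by
  have := disj_of_isLUB (g := w) hw (Qfam_ne x y) ?_ (hyband ▸ QEl_isLUB (P := P) x y)
  · exact this
  · rintro _ ⟨m, rfl⟩
    constructor
    · exact le_inf (posPart_nonneg y) (RieszSp.smul_nonneg _ _ (by positivity) (posPart_nonneg x))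
    · have h1 : w ⊓ ((m:ℝ) • x⁺) = 0 := by
        rw [posPart_eq_self.2 hx]
        exact disj_nsmul hw hx hwx m
      refine le_antisymm ?_ (le_inf hw (le_inf (posPart_nonneg y)
        (RieszSp.smul_nonneg _ _ (by positivity) (posPart_nonneg x))))
      calc w ⊓ (y⁺ ⊓ (m:ℝ) • x⁺) ≤ w ⊓ ((m:ℝ) • x⁺) := inf_le_inf_left w inf_le_right
        _ = 0 := h1

/-- the band projection is additive on positive elements -/
lemma QEl_add {x f g : D} (hf : 0 ≤ f) (hg : 0 ≤ g) :
    QEl (P := P) x (f + g) = QEl (P := P) x f + QEl (P := P) x g := by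
  have hfg : 0 ≤ f + g := by positivity
  refine le_antisymm ?_ ?_
  · apply (QEl_isLUB (P := P) x (f+g)).2
    rintro _ ⟨m, rfl⟩
    have h1 : (f+g)⁺ ⊓ ((m:ℝ) • x⁺) ≤ (f ⊓ ((m:ℝ) • x⁺)) + (g ⊓ ((m:ℝ) • x⁺)) := by
      rw [posPart_eq_self.2 hfg]
      have hsm : (0:D) ≤ (m:ℝ) • x⁺ := RieszSp.smul_nonneg _ _ (by positivity) (posPart_nonneg x)
      calc (f+g) ⊓ ((m:ℝ) • x⁺) = ((m:ℝ) • x⁺) ⊓ (f + g) := inf_comm _ _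
        _ ≤ ((m:ℝ) • x⁺) ⊓ f + ((m:ℝ) • x⁺) ⊓ g := inf_add_le' hsm hf hg
        _ = (f ⊓ ((m:ℝ) • x⁺)) + (g ⊓ ((m:ℝ) • x⁺)) := by rw [inf_comm _ f, inf_comm _ g]
    have h2 : f ⊓ ((m:ℝ) • x⁺) ≤ QEl (P := P) x f := by
      have := (QEl_isLUB (P := P) x f).1 ⟨m, rfl⟩
      rwa [posPart_eq_self.2 hf] at this
    have h3 : g ⊓ ((m:ℝ) • x⁺) ≤ QEl (P := P) x g := by
      have := (QEl_isLUB (P := P) x g).1 ⟨m, rfl⟩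
      rwa [posPart_eq_self.2 hg] at this
    exact le_trans h1 (add_le_add h2 h3)
  · -- for all k, m : f ⊓ kx + g ⊓ mx ≤ Q(f+g)
    have key : ∀ k m : ℕ, (f ⊓ ((k:ℝ) • x⁺)) + (g ⊓ ((m:ℝ) • x⁺)) ≤ QEl (P := P) x (f+g) := by
      intro k m
      have h1 : (f ⊓ ((k:ℝ) • x⁺)) + (g ⊓ ((m:ℝ) • x⁺)) ≤ (f+g)⁺ ⊓ (((k+m : ℕ):ℝ) • x⁺) := by
        apply le_inf
        · exact le_trans (add_le_add inf_le_left inf_le_left) (le_posPart (f+g))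
        · have : ((k+m : ℕ):ℝ) • x⁺ = (k:ℝ) • x⁺ + (m:ℝ) • x⁺ := by
            push_cast
            rw [add_smul]
          rw [this]
          exact add_le_add inf_le_right inf_le_right
      exact le_trans h1 ((QEl_isLUB (P := P) x (f+g)).1 ⟨k+m, rfl⟩)
    have step1 : ∀ m : ℕ, QEl (P := P) x f + (g ⊓ ((m:ℝ) • x⁺)) ≤ QEl (P := P) x (f+g) := by
      intro m
      have hub : QEl (P := P) x f ≤ QEl (P := P) x (f+g) - (g ⊓ ((m:ℝ) • x⁺)) := by
        apply (QEl_isLUB (P := P) x f).2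
        rintro _ ⟨k, rfl⟩
        rw [posPart_eq_self.2 hf]
        exact le_sub_iff_add_le.2 (key k m)
      exact le_sub_iff_add_le.1 hub
    have step2 : QEl (P := P) x g ≤ QEl (P := P) x (f+g) - QEl (P := P) x f := by
      apply (QEl_isLUB (P := P) x g).2
      rintro _ ⟨m, rfl⟩
      rw [posPart_eq_self.2 hg]
      exact le_sub_iff_add_le'.2 (step1 m)
    exact le_sub_iff_add_le'.1 step2

/-- idempotence -/
lemma QEl_idem {x g : D} (hg : 0 ≤ g) :
    QEl (P := P) x (QEl (P := P) x g) = QEl (P := P) x g := by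
  have hQ0 : 0 ≤ QEl (P := P) x g := QEl_nonneg x g
  refine le_antisymm (QEl_le (P := P) hQ0) ?_
  apply (QEl_isLUB (P := P) x g).2
  rintro _ ⟨m, rfl⟩
  have he0 : 0 ≤ g⁺ ⊓ ((m:ℝ) • x⁺) := le_inf (posPart_nonneg g)
    (RieszSp.smul_nonneg _ _ (by positivity) (posPart_nonneg x))
  have heQ : QEl (P := P) x (g⁺ ⊓ ((m:ℝ) • x⁺)) = g⁺ ⊓ ((m:ℝ) • x⁺) := by
    refine le_antisymm (QEl_le (P := P) he0) ?_
    have h1 : (g⁺ ⊓ ((m:ℝ) • x⁺))⁺ ⊓ ((m:ℝ) • x⁺) ≤ QEl (P := P) x (g⁺ ⊓ ((m:ℝ) • x⁺)) :=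
      (QEl_isLUB (P := P) x (g⁺ ⊓ ((m:ℝ) • x⁺))).1 ⟨m, rfl⟩
    have e2 : (g⁺ ⊓ ((m:ℝ) • x⁺))⁺ ⊓ ((m:ℝ) • x⁺) = g⁺ ⊓ ((m:ℝ) • x⁺) := by
      rw [posPart_eq_self.2 he0]
      exact inf_eq_left.2 inf_le_right
    rwa [e2] at h1
  have heg : g⁺ ⊓ ((m:ℝ) • x⁺) ≤ QEl (P := P) x g := (QEl_isLUB (P := P) x g).1 ⟨m, rfl⟩
  calc g⁺ ⊓ ((m:ℝ) • x⁺) = QEl (P := P) x (g⁺ ⊓ ((m:ℝ) • x⁺)) := heQ.symm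
    _ ≤ QEl (P := P) x (QEl (P := P) x g) := QEl_mono (P := P) he0 heg

end QEl

section Proj
variable {A : Type*} [CommRing A] [Lattice A] [Module ℝ A] [FAlg A]
variable {D : Type*} [AddCommGroup D] [Lattice D] [Module ℝ D] [RieszSp D]
variable {N : Type*} [CommRing N] [Lattice N] [Module ℝ N] [FAlg N]
variable [P : DualSetting A D N]

lemma nsmul_zeroG (f : D) : P.nsmul (0 : N) f = 0 := by
  have := nsmul_subG (P := P) (1 : N) 1 f
  simpa using this

lemma nsmul_zerof (G : N) : P.nsmul G (0 : D) = 0 := by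
  have h := nsmul_addf (P := P) G 0 0
  rw [add_zero] at h
  have h2 : P.nsmul G (0:D) + 0 = P.nsmul G (0:D) + P.nsmul G (0:D) := by
    rw [add_zero]; exact h
  exact (add_left_cancel h2).symm

lemma nsmul_negf (G : N) (f : D) : P.nsmul G (-f) = - P.nsmul G f := by
  have h := nsmul_addf (P := P) G f (-f)
  rw [add_neg_cancel, nsmul_zerof] at h
  exact eq_neg_of_add_eq_zero_right h.symm

lemma QEl_dsmul_band {x y : D} {a : A} (hx : 0 ≤ x) (hy : 0 ≤ y) (ha : 0 ≤ a)
    (hband : QEl (P := P) x y = y) :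
    QEl (P := P) x (P.dsmul a y) = P.dsmul a y := by
  have hh0 : 0 ≤ P.dsmul a y := dsmul_nonneg (P := P) ha hy
  set w := P.dsmul a y - QEl (P := P) x (P.dsmul a y) with hw
  have hw0 : 0 ≤ w := sub_nonneg.2 (QEl_le (P := P) hh0)
  have hwx : w ⊓ x = 0 := QEl_compl_disj (P := P) hx hh0
  have hyw : w ⊓ y = 0 := QEl_band_disj (P := P) hx hy hw0 hband hwx
  have hdw : (P.dsmul a y) ⊓ w = 0 := by
    have h2 : y ⊓ w = 0 := by rwa [inf_comm] at hyw
    have h3 := nabs (P := P) (hatN_nonneg (P := P) ha) hy hw0 h2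
    rwa [nsmul_hat] at h3
  have hwle : w ≤ P.dsmul a y := sub_le_self _ (QEl_nonneg (P := P) x _)
  have hweq : w = 0 := by
    have : w = w ⊓ (P.dsmul a y) := (inf_eq_left.2 hwle).symm
    rw [this, inf_comm]
    exact hdw
  have h5 : P.dsmul a y - QEl (P := P) x (P.dsmul a y) = 0 := by rw [← hw]; exact hweq
  have h6 := sub_eq_zero.1 h5
  exact h6.symm

lemma QEl_dsmul {x g : D} {a : A} (hx : 0 ≤ x) (hg : 0 ≤ g) (ha : 0 ≤ a) :
    QEl (P := P) x (P.dsmul a g) = P.dsmul a (QEl (P := P) x g) := by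
  have hq0 : 0 ≤ QEl (P := P) x g := QEl_nonneg (P := P) x g
  have hr0 : 0 ≤ g - QEl (P := P) x g := sub_nonneg.2 (QEl_le (P := P) hg)
  have hdecomp : P.dsmul a g
      = P.dsmul a (QEl (P := P) x g) + P.dsmul a (g - QEl (P := P) x g) := by
    rw [← dsmul_add]
    congr 1
    abel
  have h1 : QEl (P := P) x (P.dsmul a (QEl (P := P) x g)) = P.dsmul a (QEl (P := P) x g) :=
    QEl_dsmul_band (P := P) hx hq0 ha (QEl_idem (P := P) hg)
  have h2 : QEl (P := P) x (P.dsmul a (g - QEl (P := P) x g)) = 0 := by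
    apply QEl_zero_of_disj (P := P) hx (dsmul_nonneg (P := P) ha hr0)
    have hrx : (g - QEl (P := P) x g) ⊓ x = 0 := QEl_compl_disj (P := P) hx hg
    have hxr : x ⊓ (g - QEl (P := P) x g) = 0 := by rwa [inf_comm] at hrx
    have h3 := nabs (P := P) (hatN_nonneg (P := P) ha) hr0 hx hrx
    rwa [nsmul_hat] at h3
  rw [hdecomp, QEl_add (P := P) (dsmul_nonneg (P := P) ha hq0) (dsmul_nonneg (P := P) ha hr0),
    h1, h2, add_zero]

lemma QEl_zero' (x : D) : QEl (P := P) x 0 = 0 := by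
  refine le_antisymm ?_ (QEl_nonneg (P := P) x 0)
  apply (QEl_isLUB (P := P) x 0).2
  rintro _ ⟨m, rfl⟩
  have : (0:D)⁺ = 0 := posPart_eq_self.2 le_rfl
  rw [this]
  exact inf_le_left

lemma QEl_smul {x g : D} {r : ℝ} (hr : 0 < r) (hg : 0 ≤ g) :
    QEl (P := P) x (r • g) = r • QEl (P := P) x g := by
  have key : IsLUB (Qfam x (r • g)) (r • QEl (P := P) x g) := by
    constructor
    · rintro _ ⟨m, rfl⟩
      obtain ⟨k, hk⟩ : ∃ k : ℕ, (m:ℝ) ≤ r * k := by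
        refine ⟨Nat.ceil ((m:ℝ) / r), ?_⟩
        have := Nat.le_ceil ((m:ℝ) / r)
        calc (m:ℝ) = r * ((m:ℝ)/r) := by field_simp
          _ ≤ r * (Nat.ceil ((m:ℝ)/r)) := by
              apply mul_le_mul_of_nonneg_left this hr.le
      have h1 : (r • g)⁺ ⊓ ((m:ℝ) • x⁺) ≤ (r • g)⁺ ⊓ ((r * k) • x⁺) :=
        inf_le_inf_left _ (smul_le_smul_sc hk (posPart_nonneg x))
      have h2 : (r • g)⁺ ⊓ ((r * k) • x⁺) = r • (g⁺ ⊓ ((k:ℝ) • x⁺)) := by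
        rw [posPart_smul hr.le, rsmul_inf hr, smul_smul]
      have h3 : g⁺ ⊓ ((k:ℝ) • x⁺) ≤ QEl (P := P) x g := (QEl_isLUB (P := P) x g).1 ⟨k, rfl⟩
      calc (r • g)⁺ ⊓ ((m:ℝ) • x⁺) ≤ r • (g⁺ ⊓ ((k:ℝ) • x⁺)) := by rw [← h2]; exact h1
        _ ≤ r • QEl (P := P) x g := rsmul_mono hr.le h3
    · intro w hw
      have hL : QEl (P := P) x g ≤ r⁻¹ • w := by
        apply (QEl_isLUB (P := P) x g).2
        rintro _ ⟨k, rfl⟩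
        obtain ⟨m, hm⟩ : ∃ m : ℕ, r * k ≤ (m:ℝ) := ⟨Nat.ceil (r * k), Nat.le_ceil _⟩
        have h1 : r • (g⁺ ⊓ ((k:ℝ) • x⁺)) ≤ (r • g)⁺ ⊓ ((m:ℝ) • x⁺) := by
          rw [posPart_smul hr.le, rsmul_inf hr, smul_smul]
          exact inf_le_inf_left _ (smul_le_smul_sc hm (posPart_nonneg x))
        have h2 : r • (g⁺ ⊓ ((k:ℝ) • x⁺)) ≤ w := le_trans h1 (hw ⟨m, rfl⟩)
        have h3 : r⁻¹ • (r • (g⁺ ⊓ ((k:ℝ) • x⁺))) ≤ r⁻¹ • w := rsmul_mono (by positivity) h2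
        rwa [smul_smul, inv_mul_cancel₀ hr.ne', one_smul] at h3
      have := rsmul_mono hr.le hL
      rwa [smul_smul, mul_inv_cancel₀ hr.ne', one_smul] at this
  exact (QEl_isLUB (P := P) x (r • g)).unique key

/-- the band projection multiplier in `N` -/
lemma exists_projN {x σ : D} (hx : 0 ≤ x) (hσ : 0 ≤ σ) (hdisj : x ⊓ σ = 0) :
    ∃ E : N, 0 ≤ E ∧ E ≤ 1 ∧ E * E = E ∧ P.nsmul E x = x ∧ P.nsmul E σ = 0 := by
  set p : D → ℝ := fun g => P.bidual 1 (QEl (P := P) x g) with hp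
  have hp_pos : ∀ g : D, 0 ≤ g → 0 ≤ p g :=
    fun g _ => bidual_nonneg' (P := P) one_nonneg_N (QEl_nonneg (P := P) x g)
  have hp_le : ∀ g : D, 0 ≤ g → p g ≤ P.bidual 1 g :=
    fun g hg => bidual_mono_right (P := P) one_nonneg_N (QEl_le (P := P) hg)
  have hadd : ∀ u v : D, 0 ≤ u → 0 ≤ v → p (u + v) = p u + p v := by
    intro u v hu hv
    rw [hp]
    simp only
    rw [QEl_add (P := P) hu hv, map_add]
  have hp0 : p 0 = 0 := by
    rw [hp]
    simp only
    rw [QEl_zero', map_zero]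
  have hsmul : ∀ (r : ℝ) (u : D), 0 ≤ r → 0 ≤ u → p (r • u) = r * p u := by
    intro r u hr hu
    rcases eq_or_lt_of_le hr with h | h
    · rw [← h, zero_smul, hp0, zero_mul]
    · rw [hp]
      simp only
      rw [QEl_smul (P := P) h hu, map_smul, smul_eq_mul]
  obtain ⟨ℓ, hℓ⟩ := ext_linear p hadd hsmul
  have hℓpos : ∀ g : D, 0 ≤ g → ℓ g = p g := by
    intro g hg
    rw [hℓ, posPart_eq_self.2 hg, negPart_eq_zero.2 hg, hp0, sub_zero]
  have hbdd : OrderBddFn ℓ := by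
    intro u v
    refine ⟨P.bidual 1 (v⁺) + P.bidual 1 (u⁻), ?_⟩
    intro g hug hgv
    have h1 : p (g⁺) ≤ P.bidual 1 (v⁺) :=
      le_trans (hp_le _ (posPart_nonneg g))
        (bidual_mono_right (P := P) one_nonneg_N (posPart_mono hgv))
    have h2 : p (g⁻) ≤ P.bidual 1 (u⁻) :=
      le_trans (hp_le _ (negPart_nonneg g))
        (bidual_mono_right (P := P) one_nonneg_N (negPart_anti hug))
    have h3 : 0 ≤ p (g⁺) := hp_pos _ (posPart_nonneg g)
    have h4 : 0 ≤ p (g⁻) := hp_pos _ (negPart_nonneg g)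
    rw [hℓ, abs_le]
    constructor <;> linarith
  have hcont : OrdContFn ℓ := by
    intro s hne hdir hglb ε hε
    obtain ⟨d, hd, hdv⟩ := P.bidual_cont 1 s hne hdir hglb ε hε
    refine ⟨d, hd, ?_⟩
    intro d' hd' hdle
    have h0 : (0:D) ≤ d' := hglb.1 hd'
    have h1 := hdv d' hd' hdle
    have h2 : 0 ≤ P.bidual 1 d' := bidual_nonneg' (P := P) one_nonneg_N h0
    rw [hℓpos d' h0, abs_lt]
    have h3 := hp_pos d' h0
    have h4 := hp_le d' h0
    rw [abs_lt] at h1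
    constructor <;> linarith
  obtain ⟨E, hE⟩ := P.bidual_surj ℓ hbdd hcont
  have hEval : ∀ g : D, 0 ≤ g → P.bidual E g = p g := by
    intro g hg
    rw [hE]
    exact hℓpos g hg
  have k1 : ∀ g : D, 0 ≤ g → P.nsmul E g = QEl (P := P) x g := by
    intro g hg
    apply dual_eq_of_pos (P := P)
    intro a ha
    rw [P.nsmul_eval, hEval _ (dsmul_nonneg (P := P) ha hg)]
    rw [hp]
    simp only
    rw [QEl_dsmul (P := P) hx hg ha]
    rw [← P.nsmul_eval, nsmul_one']
  refine ⟨E, ?_, ?_, ?_, ?_, ?_⟩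
  · apply (P.bidual_order E).2
    intro g hg
    rw [hEval g hg]
    exact hp_pos g hg
  · rw [le_iff_bidual (P := P)]
    intro g hg
    rw [hEval g hg]
    exact hp_le g hg
  · apply bidual_eq_of_pos (P := P)
    intro g hg
    rw [P.mul_eval, k1 g hg, hEval _ (QEl_nonneg (P := P) x g), hEval g hg]
    rw [hp]
    simp only
    rw [QEl_idem (P := P) hg]
  · rw [k1 x hx]
    exact QEl_self (P := P) hx
  · rw [k1 σ hσ]
    exact QEl_zero_of_disj (P := P) hx hσ (by rwa [inf_comm] at hdisj)

/-- band preservation of f-linear operators -/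
lemma band_pres (T : D →ₗ[ℝ] D)
    (hlin : ∀ (G : N) (f : D), T (P.nsmul G f) = P.nsmul G (T f))
    {x σ : D} (hx : 0 ≤ x) (hσ : 0 ≤ σ) (hdisj : x ⊓ σ = 0) :
    |T x| ⊓ σ = 0 := by
  obtain ⟨E, hE0, hE1, hEE, hEx, hEσ⟩ := exists_projN (P := P) hx hσ hdisj
  have hTx : T x = P.nsmul E (T x) := by
    conv_lhs => rw [← hEx, hlin]
  have habs : |T x| ≤ P.nsmul E |T x| := by
    apply sup_le
    · calc T x = P.nsmul E (T x) := hTx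
        _ ≤ P.nsmul E |T x| := nsmul_monof (P := P) hE0 (le_abs_self (T x))
    · calc -(T x) = P.nsmul E (-(T x)) := by rw [nsmul_negf, ← hTx]
        _ ≤ P.nsmul E |T x| := nsmul_monof (P := P) hE0 (neg_le_abs (T x))
  set z := |T x| ⊓ σ with hz
  have hz0 : 0 ≤ z := le_inf (abs_nonneg (T x)) hσ
  have h1 : P.nsmul E z = 0 := by
    refine le_antisymm ?_ (nsmul_nonneg' (P := P) hE0 hz0)
    calc P.nsmul E z ≤ P.nsmul E σ := nsmul_monof (P := P) hE0 inf_le_right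
      _ = 0 := hEσ
  have h2 : P.nsmul (1 - E) z = 0 := by
    refine le_antisymm ?_ (nsmul_nonneg' (P := P) (sub_nonneg.2 hE1) hz0)
    have step : P.nsmul (1-E) z ≤ P.nsmul (1-E) (P.nsmul E |T x|) :=
      nsmul_monof (P := P) (sub_nonneg.2 hE1) (le_trans inf_le_left habs)
    have heq : P.nsmul (1-E) (P.nsmul E |T x|) = 0 := by
      rw [← nsmul_mul, sub_mul, one_mul, hEE, sub_self, nsmul_zeroG]
    rwa [heq] at step
  have : z = P.nsmul E z + P.nsmul (1 - E) z := by
    rw [← nsmul_addG]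
    simp only [add_sub_cancel]
    rw [nsmul_one']
  rw [this, h1, h2, add_zero]

end Proj

variable {A : Type*} [CommRing A] [Lattice A] [Module ℝ A] [FAlg A]
variable {D : Type*} [AddCommGroup D] [Lattice D] [Module ℝ D] [RieszSp D]
variable {N : Type*} [CommRing N] [Lattice N] [Module ℝ N] [FAlg N]
variable [P : DualSetting A D N]


/-- An operator on `A^∼` is order bounded if it maps order intervals into order intervals. -/
def OrderBddOp (T : D →ₗ[ℝ] D) : Prop :=
  ∀ a b : D, ∃ u v : D, ∀ x : D, a ≤ x → x ≤ b → u ≤ T x ∧ T x ≤ v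

/-- A band preserving operator: it preserves disjointness. -/
def BandPreserving (T : D →ₗ[ℝ] D) : Prop :=
  ∀ f g : D, |f| ⊓ |g| = 0 → |T f| ⊓ |g| = 0

/-- An orthomorphism is an order bounded band preserving operator. -/
def IsOrthomorphism (T : D →ₗ[ℝ] D) : Prop := OrderBddOp T ∧ BandPreserving T


include P in
lemma arch_le {c V : D} (h : ∀ m : ℕ, (m:ℝ) • c ≤ V) : c ≤ 0 := by
  have h0 : ∀ a : A, 0 ≤ a → P.dual c a ≤ P.dual (0:D) a := by
    intro a ha
    rw [map_zero, LinearMap.zero_apply]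
    by_contra hc
    push_neg at hc
    obtain ⟨m, hm⟩ := exists_nat_gt (P.dual V a / P.dual c a)
    have h1 := dual_mono_left (P := P) (h m) ha
    rw [map_smul, LinearMap.smul_apply, smul_eq_mul] at h1
    rw [div_lt_iff₀ hc] at hm
    linarith
  exact le_iff_dual.2 h0

include P in
lemma arch_D {c V : D} (hc : 0 ≤ c) (h : ∀ m : ℕ, (m:ℝ) • c ≤ V) : c = 0 :=
  le_antisymm (arch_le (P := P) h) hc


/-- The order adjoint of an order bounded f-linear operator satisfies
`G ⋅ T'(F) = T'(G ⋅ F)` for the Arens product on `(A^∼)^∼_n`. -/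
theorem stmt12 (T : D →ₗ[ℝ] D) (hT : OrderBddOp T)
    (hlin : ∀ (G : N) (f : D), T (P.nsmul G f) = P.nsmul G (T f)) (F : N) :
    ∃ F' : N, (∀ d : D, P.bidual F' d = P.bidual F (T d)) ∧
      ∀ G H : N, (∀ d : D, P.bidual H d = P.bidual (G * F) (T d)) →
        G * F' = H := by
  classical
  -- bounds for `T` on intervals `[0, d]`
  choose uu vv huv using hT
  set Vb : D → D := fun d => (vv 0 d) ⊔ (-(uu 0 d)) ⊔ 0 with hVb
  have hVbnd : ∀ d x : D, 0 ≤ x → x ≤ d → |T x| ≤ Vb d := by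
    intro d x hx hxd
    have h1 := huv 0 d x hx hxd
    apply sup_le
    · exact le_trans h1.2 (le_trans le_sup_left le_sup_left)
    · have h2 : -(T x) ≤ -(uu 0 d) := neg_le_neg_iff.2 h1.1
      exact le_trans h2 (le_trans le_sup_right le_sup_left)
  have hVb0 : ∀ d : D, 0 ≤ Vb d := fun d => le_sup_right
  set Φ : D →ₗ[ℝ] ℝ := (P.bidual F).comp T with hΦ
  have hΦval : ∀ d : D, Φ d = P.bidual F (T d) := fun d => rfl
  -- Φ is order bounded
  have hbdd : OrderBddFn Φ := by
    intro a b
    obtain ⟨M, hM⟩ := P.bidual_bdd F (uu a b) (vv a b)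
    exact ⟨M, fun x hax hxb => hM (T x) (huv a b x hax hxb).1 (huv a b x hax hxb).2⟩
  -- Φ is order continuous
  have hcont : OrdContFn Φ := by
    intro s hne hdir hglb ε hε
    obtain ⟨d0, hd0⟩ := hne
    set s0 : Set D := {d | d ∈ s ∧ d ≤ d0} with hs0
    have hd00 : d0 ∈ s0 := ⟨hd0, le_rfl⟩
    have hs0sub : ∀ d ∈ s0, d ∈ s := fun d hd => hd.1
    have hs0pos : ∀ d ∈ s0, (0:D) ≤ d := fun d hd => hglb.1 hd.1
    have hs0dir : ∀ d1 ∈ s0, ∀ d2 ∈ s0, ∃ d ∈ s0, d ≤ d1 ∧ d ≤ d2 := by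
      intro d1 hd1 d2 hd2
      obtain ⟨w, hw, h1, h2⟩ := hdir d1 hd1.1 d2 hd2.1
      exact ⟨w, ⟨hw, le_trans h1 hd1.2⟩, h1, h2⟩
    have hs0glb : ∀ e : D, (∀ d ∈ s0, e ≤ d) → e ≤ 0 := by
      intro e he
      apply hglb.2
      intro d hd
      obtain ⟨w, hw, h1, h2⟩ := hdir d hd d0 hd0
      exact le_trans (he w ⟨hw, h2⟩) h1
    -- the set of eventual bounds of `|T|` on `s0`
    set t : Set D := {w | 0 ≤ w ∧ ∃ d ∈ s0, ∀ d' ∈ s0, d' ≤ d → |T d'| ≤ w} with ht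
    have htV : ∀ d ∈ s0, Vb d ∈ t := by
      intro d hd
      exact ⟨hVb0 d, d, hd, fun d' hd' hdle => hVbnd d d' (hs0pos d' hd') hdle⟩
    have htne : t.Nonempty := ⟨Vb d0, htV d0 hd00⟩
    have htdir : DirectedOn (· ≥ ·) t := by
      rintro w1 ⟨hw1, d1, hd1, hb1⟩ w2 ⟨hw2, d2, hd2, hb2⟩
      obtain ⟨d, hd, h1, h2⟩ := hs0dir d1 hd1 d2 hd2
      refine ⟨w1 ⊓ w2, ⟨le_inf hw1 hw2, d, hd, ?_⟩, inf_le_left, inf_le_right⟩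
      intro d' hd' hdle
      exact le_inf (hb1 d' hd' (le_trans hdle h1)) (hb2 d' hd' (le_trans hdle h2))
    -- `0` is the greatest lower bound of `t`
    have htglb : IsGLB t 0 := by
      constructor
      · intro w hw
        exact hw.1
      · intro e he
        set e' := e ⊔ 0 with he'
        have he'0 : (0:D) ≤ e' := le_sup_right
        have he'lb : ∀ w ∈ t, e' ≤ w := fun w hw => sup_le (he hw) hw.1
        -- Step A : e' is disjoint from every element of s0
        have stepA : ∀ u ∈ s0, e' ⊓ u = 0 := by
          intro u hu
          set V := Vb u with hV
          have hVu : ∀ x : D, 0 ≤ x → x ≤ u → |T x| ≤ V := fun x => hVbnd u x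
          have hVt : V ∈ t := htV u hu
          have hu0 : (0:D) ≤ u := hs0pos u hu
          -- Step A1
          have stepA1 : ∀ n : ℕ, ∀ β ∈ s0, β ≤ u →
              (e' - ((n:ℝ)+1)⁻¹ • V)⁺ ⊓ (((n:ℝ)+1)⁻¹ • u - β)⁺ = 0 := by
            intro n β hβ hβu
            set r : ℝ := ((n:ℝ)+1)⁻¹ with hr
            have hrpos : 0 < r := by positivity
            set σ := (r • u - β)⁺ with hσ
            set c0 := (e' - r • V)⁺ ⊓ σ with hc0
            have hc00 : 0 ≤ c0 := le_inf (posPart_nonneg _) (posPart_nonneg _)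
            have hkey : ∀ m : ℕ, (m:ℝ) • c0 ≤ V := by
              intro m
              induction m with
              | zero => simpa using hVb0 u
              | succ m ih =>
                -- the new eventual bound
                have hwm : r • V + (V - V ⊓ ((m:ℝ) • c0)) ∈ t := by
                  constructor
                  · have : V ⊓ ((m:ℝ) • c0) ≤ V := inf_le_left
                    have h2 : 0 ≤ V - V ⊓ ((m:ℝ) • c0) := sub_nonneg.2 this
                    have h3 : 0 ≤ r • V := RieszSp.smul_nonneg _ _ hrpos.le (hVb0 u)
                    rw [hV] at h3 h2 ⊢
                    exact add_nonneg h3 h2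
                  · refine ⟨β, hβ, ?_⟩
                    intro d' hd' hdβ
                    have hd'0 : 0 ≤ d' := hs0pos d' hd'
                    set x1 := d' ⊓ (r • u) with hx1
                    have hx10 : 0 ≤ x1 :=
                      le_inf hd'0 (RieszSp.smul_nonneg _ _ hrpos.le hu0)
                    have hx2eq : d' - x1 = (d' - r • u)⁺ := sub_inf_eq_posPart d' (r • u)
                    set x2 := (d' - r • u)⁺ with hx2
                    have hx20 : 0 ≤ x2 := posPart_nonneg _
                    have hsplit : d' = x1 + x2 := by rw [← hx2eq]; abel
                    -- |T x1| ≤ r • V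
                    have habs1 : |T x1| ≤ r • V := by
                      have hn1 : ((n:ℝ)+1) • x1 ≤ u := by
                        have h5 : x1 ≤ r • u := inf_le_right
                        have h6 := rsmul_mono (by positivity : (0:ℝ) ≤ (n:ℝ)+1) h5
                        rwa [smul_smul, mul_inv_cancel₀ (by positivity : ((n:ℝ)+1) ≠ 0),
                          one_smul] at h6
                      have hn0 : (0:D) ≤ ((n:ℝ)+1) • x1 :=
                        RieszSp.smul_nonneg _ _ (by positivity) hx10
                      have h7 := hVu _ hn0 hn1
                      rw [map_smul, abs_smul' (by positivity : (0:ℝ) ≤ (n:ℝ)+1)] at h7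
                      have h8 := rsmul_mono (le_of_lt hrpos) h7
                      rwa [smul_smul, inv_mul_cancel₀ (by positivity : ((n:ℝ)+1) ≠ 0),
                        one_smul] at h8
                    -- |T x2| is disjoint from c0
                    have hx2σ : x2 ⊓ σ = 0 := by
                      have h9 : x2 ≤ (β - r • u)⁺ := posPart_mono (by
                        have := sub_le_sub_right hdβ (r • u)
                        exact this)
                      have h10 : σ = (β - r • u)⁻ := by
                        rw [hσ, ← posPart_neg', neg_sub]
                      refine le_antisymm ?_ (le_inf hx20 (posPart_nonneg _))
                      calc x2 ⊓ σ ≤ (β - r • u)⁺ ⊓ σ := inf_le_inf_right σ h9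
                        _ = (β - r • u)⁺ ⊓ (β - r • u)⁻ := by rw [h10]
                        _ = 0 := posPart_inf_negPart_eq_zero _
                    have hx2c0 : x2 ⊓ c0 = 0 := by
                      refine le_antisymm ?_ (le_inf hx20 hc00)
                      calc x2 ⊓ c0 ≤ x2 ⊓ σ := inf_le_inf_left x2 inf_le_right
                        _ = 0 := hx2σ
                    have hTx2 : |T x2| ⊓ ((m:ℝ) • c0) = 0 :=
                      disj_nsmul (abs_nonneg (T x2)) hc00
                        (band_pres (P := P) T hlin hx20 hc00 hx2c0) m
                    have hTx2V : |T x2| ≤ V :=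
                      hVu x2 hx20 (le_trans (le_trans (hx2eq ▸ sub_le_self d' hx10) hdβ) hβu)
                    have hTx2' : |T x2| ≤ V - V ⊓ ((m:ℝ) • c0) := by
                      have := add_inf_le_of_disj hTx2V hTx2
                      exact le_sub_iff_add_le.2 this
                    calc |T d'| = |T x1 + T x2| := by rw [hsplit, map_add]
                      _ ≤ |T x1| + |T x2| := abs_add_le _ _
                      _ ≤ r • V + (V - V ⊓ ((m:ℝ) • c0)) := add_le_add habs1 hTx2'
                -- derive the induction step
                have hle := he'lb _ hwm
                have h11 : e' - r • V ≤ V - V ⊓ ((m:ℝ) • c0) := by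
                  have := sub_le_sub_right hle (r • V)
                  calc e' - r • V ≤ r • V + (V - V ⊓ ((m:ℝ) • c0)) - r • V := this
                    _ = V - V ⊓ ((m:ℝ) • c0) := by abel
                have h12 : (e' - r • V)⁺ ≤ V - V ⊓ ((m:ℝ) • c0) := by
                  rw [posPart_def]
                  refine sup_le h11 (sub_nonneg.2 inf_le_left)
                have h13 : V ⊓ ((m:ℝ) • c0) = (m:ℝ) • c0 := inf_eq_right.2 ih
                have h14 : c0 ≤ V - (m:ℝ) • c0 := by
                  calc c0 ≤ (e' - r • V)⁺ := inf_le_left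
                    _ ≤ V - V ⊓ ((m:ℝ) • c0) := h12
                    _ = V - (m:ℝ) • c0 := by rw [h13]
                have h15 : (m:ℝ) • c0 + c0 ≤ V := by
                  have h16 := add_le_add_right h14 ((m:ℝ) • c0)
                  calc (m:ℝ) • c0 + c0 ≤ (m:ℝ) • c0 + (V - (m:ℝ) • c0) := h16
                    _ = V := by abel
                calc ((m+1 : ℕ):ℝ) • c0 = (m:ℝ) • c0 + c0 := by
                      push_cast
                      rw [add_smul, one_smul]
                  _ ≤ V := h15
            exact arch_D (P := P) hc00 hkey
          -- Step A2 : for each n, (e' - r_n V)⁺ ⊓ u = 0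
          have stepA2 : ∀ n : ℕ, (e' - ((n:ℝ)+1)⁻¹ • V)⁺ ⊓ u = 0 := by
            intro n
            set r : ℝ := ((n:ℝ)+1)⁻¹ with hr
            have hrpos : 0 < r := by positivity
            set g := (e' - r • V)⁺ with hg
            have hg0 : 0 ≤ g := posPart_nonneg _
            -- the family of elements (r•u - β)⁺ for β in the tail below u has LUB r•u
            set s0u : Set D := {β | β ∈ s0 ∧ β ≤ u} with hs0u
            have hs0une : s0u.Nonempty := by
              obtain ⟨w, hw, h1, h2⟩ := hs0dir u hu u hu
              exact ⟨w, hw, h1⟩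
            have hs0uglb : IsGLB s0u 0 := by
              constructor
              · intro βx hβx
                exact hs0pos βx hβx.1
              · intro e2 he2
                apply hs0glb
                intro d hd
                obtain ⟨w, hw, h1, h2⟩ := hs0dir d hd u hu
                exact le_trans (he2 ⟨hw, h2⟩) h1
            have hZlub : IsLUB ((fun β => (r • u - β)⁺) '' s0u) ((r • u)⁺) := by
              have h1 : IsLUB ((fun β => -β) '' s0u) (0:D) := by
                have := isLUB_negimg hs0uglb
                simpa using this
              have h2 : IsLUB ((fun y => r • u + y) '' ((fun β => -β) '' s0u)) (r • u) := by
                have := isLUB_shift (r • u) h1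
                simpa using this
              have h3 : ((fun y => r • u + y) '' ((fun β => -β) '' s0u))
                  = (fun β => r • u - β) '' s0u := by
                rw [← Set.image_comp]
                apply Set.image_congr
                intro β _
                simp [sub_eq_add_neg]
              rw [h3] at h2
              have h4 := isLUB_posPart (hs0une.image _) h2
              have h5 : ((fun x => x⁺) '' ((fun β => r • u - β) '' s0u))
                  = (fun β => (r • u - β)⁺) '' s0u := by
                rw [← Set.image_comp]
                rfl
              rwa [h5] at h4
            have hrupos : (0:D) ≤ r • u := RieszSp.smul_nonneg _ _ hrpos.le hu0
            have hZlub' : IsLUB ((fun β => (r • u - β)⁺) '' s0u) (r • u) := by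
              rwa [posPart_eq_self.2 hrupos] at hZlub
            have hgu : g ⊓ (r • u) = 0 := by
              apply disj_of_isLUB hg0 (hs0une.image _) ?_ hZlub'
              rintro _ ⟨β, hβ, rfl⟩
              exact ⟨posPart_nonneg _, stepA1 n β hβ.1 hβ.2⟩
            -- scale up
            have hfin : g ⊓ (((n+1:ℕ):ℝ) • (r • u)) = 0 :=
              disj_nsmul hg0 hrupos hgu (n+1)
            have : ((n+1:ℕ):ℝ) • (r • u) = u := by
              rw [smul_smul, hr]
              push_cast
              rw [mul_inv_cancel₀ (by positivity : ((n:ℝ)+1) ≠ 0), one_smul]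
            rwa [this] at hfin
          -- Step A3 : the posParts increase to e'
          have stepA3 : IsLUB (Set.range (fun n : ℕ => (e' - ((n:ℝ)+1)⁻¹ • V)⁺)) e' := by
            constructor
            · rintro _ ⟨n, rfl⟩
              have h1 : e' - ((n:ℝ)+1)⁻¹ • V ≤ e' :=
                sub_le_self _ (RieszSp.smul_nonneg _ _ (by positivity) (hVb0 u))
              calc (e' - ((n:ℝ)+1)⁻¹ • V)⁺ ≤ e'⁺ := posPart_mono h1
                _ = e' := posPart_eq_self.2 he'0
            · intro w hw
              have h2 : ∀ n : ℕ, ((n:ℝ)+1) • (e' - w) ≤ V := by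
                intro n
                have h3 : e' - ((n:ℝ)+1)⁻¹ • V ≤ w :=
                  le_trans (le_posPart _) (hw ⟨n, rfl⟩)
                have h4 : e' - w ≤ ((n:ℝ)+1)⁻¹ • V := by
                  have := sub_le_sub_right (sub_le_iff_le_add.1 h3) w
                  calc e' - w ≤ ((n:ℝ)+1)⁻¹ • V + w - w := by
                        have h5 : e' ≤ w + ((n:ℝ)+1)⁻¹ • V := sub_le_iff_le_add.1 h3
                        have h6 := sub_le_sub_right h5 w
                        calc e' - w ≤ w + ((n:ℝ)+1)⁻¹ • V - w := h6
                          _ = ((n:ℝ)+1)⁻¹ • V + w - w := by abel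
                    _ = ((n:ℝ)+1)⁻¹ • V := by abel
                have h7 := rsmul_mono (by positivity : (0:ℝ) ≤ (n:ℝ)+1) h4
                rwa [smul_smul, mul_inv_cancel₀ (by positivity : ((n:ℝ)+1) ≠ 0),
                  one_smul] at h7
              have h8 : ∀ m : ℕ, (m:ℝ) • (e' - w) ≤ V := by
                intro m
                cases m with
                | zero => simpa using hVb0 u
                | succ k =>
                  have := h2 k
                  push_cast
                  push_cast at this
                  exact this
              have h9 : e' - w ≤ 0 := arch_le (P := P) h8
              exact sub_nonpos.1 h9
          -- Step A4 : distributivity gives e' ⊓ u = 0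
          have hA4 : u ⊓ e' = 0 := by
            apply disj_of_isLUB hu0 (Set.range_nonempty _) ?_ stepA3
            rintro _ ⟨n, rfl⟩
            refine ⟨posPart_nonneg _, ?_⟩
            rw [inf_comm]
            exact stepA2 n
          rwa [inf_comm] at hA4
        -- Step B : e' = 0, hence e ≤ 0
        have hB : e' = 0 := by
          set V := Vb d0 with hV
          have hkey : ∀ m : ℕ, (m:ℝ) • e' ≤ V := by
            intro m
            induction m with
            | zero => simpa using hVb0 d0
            | succ m ih =>
              have hwm : V - V ⊓ ((m:ℝ) • e') ∈ t := by
                constructor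
                · exact sub_nonneg.2 inf_le_left
                · refine ⟨d0, hd00, ?_⟩
                  intro d' hd' hdle
                  have hd'0 := hs0pos d' hd'
                  have h1 : |T d'| ≤ V := hVbnd d0 d' hd'0 hd'.2
                  have h2 : d' ⊓ e' = 0 := by
                    have := stepA d' hd'
                    rwa [inf_comm] at this
                  have h3 : |T d'| ⊓ ((m:ℝ) • e') = 0 :=
                    disj_nsmul (abs_nonneg (T d')) he'0
                      (band_pres (P := P) T hlin hd'0 he'0 h2) m
                  exact le_sub_iff_add_le.2 (add_inf_le_of_disj h1 h3)
              have hle := he'lb _ hwm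
              have h13 : V ⊓ ((m:ℝ) • e') = (m:ℝ) • e' := inf_eq_right.2 ih
              rw [h13] at hle
              have h15 : (m:ℝ) • e' + e' ≤ V := by
                have := add_le_add_right hle ((m:ℝ) • e')
                calc (m:ℝ) • e' + e' ≤ (m:ℝ) • e' + (V - (m:ℝ) • e') := this
                  _ = V := by abel
              calc ((m+1 : ℕ):ℝ) • e' = (m:ℝ) • e' + e' := by
                    push_cast
                    rw [add_smul, one_smul]
                _ ≤ V := h15
          exact arch_D (P := P) he'0 hkey
        calc e ≤ e' := le_sup_left
          _ = 0 := hB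
    -- apply order continuity of `bidual (F⁺ + F⁻)` along `t`
    set W : N := F⁺ + F⁻ with hW
    have hW0 : (0:N) ≤ W := add_nonneg (posPart_nonneg F) (negPart_nonneg F)
    obtain ⟨w, hwt, hwv⟩ := P.bidual_cont W t htne htdir htglb ε hε
    have hwt' := hwt
    obtain ⟨hw0, d, hd, hdom⟩ := hwt'
    refine ⟨d, hd.1, ?_⟩
    intro d' hd' hdle
    have hd'0 : d' ∈ s0 := ⟨hd', le_trans hdle hd.2⟩
    have h1 : |T d'| ≤ w := hdom d' hd'0 hdle
    have h2 : |Φ d'| ≤ P.bidual W |T d'| := by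
      have e1 : P.bidual F (T d') = P.bidual (F⁺) (T d') - P.bidual (F⁻) (T d') := by
        rw [← LinearMap.sub_apply, ← map_sub, posPart_sub_negPart]
      have e2 := abs_bidual_le (P := P) (posPart_nonneg F) (T d')
      have e3 := abs_bidual_le (P := P) (negPart_nonneg F) (T d')
      have e4 : P.bidual W |T d'| = P.bidual (F⁺) |T d'| + P.bidual (F⁻) |T d'| := by
        rw [hW, map_add, LinearMap.add_apply]
      rw [hΦval, e1, e4]
      have := abs_sub (P.bidual (F⁺) (T d')) (P.bidual (F⁻) (T d'))
      calc |P.bidual (F⁺) (T d') - P.bidual (F⁻) (T d')|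
          ≤ |P.bidual (F⁺) (T d')| + |P.bidual (F⁻) (T d')| := abs_sub _ _
        _ ≤ P.bidual (F⁺) |T d'| + P.bidual (F⁻) |T d'| := add_le_add e2 e3
    have h3 : P.bidual W |T d'| ≤ P.bidual W w := bidual_mono_right (P := P) hW0 h1
    have h4 := hwv w hwt le_rfl
    have h5 : 0 ≤ P.bidual W w := bidual_nonneg' (P := P) hW0 hw0
    rw [abs_lt] at h4
    calc |Φ d'| ≤ P.bidual W w := le_trans h2 h3
      _ < ε := by linarith [abs_nonneg (Φ d')]
  -- construct F'
  obtain ⟨F', hF'⟩ := P.bidual_surj Φ hbdd hcont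
  refine ⟨F', fun d => by rw [hF']; rfl, ?_⟩
  intro G H hH
  apply P.bidual_inj
  ext f
  have key : P.nsmul F' f = P.nsmul F (T f) := by
    apply dual_eq_of_pos (P := P)
    intro a _
    rw [P.nsmul_eval, P.nsmul_eval, hF']
    have e1 : Φ (P.dsmul a f) = P.bidual F (T (P.dsmul a f)) := rfl
    rw [e1, ← nsmul_hat (P := P) a f, hlin, nsmul_hat]
  rw [P.mul_eval, key, ← P.mul_eval, hH f]
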